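/- arXiv:2205.13910 — 3 statements merged into one kernel-verified Lean document; each statement's English description precedes it below -/
import Mathlib

section
/- Let q ∈ [1, ∞) and let U be distributed uniformly on the open ℓ1-ball B_1^d = {x ∈ ℝ^d : ||x||_1 < 1}. Then E[||U||_q] ≤ q·d^{1/q}/(d+1). -/
open MeasureTheory ProbabilityTheory Real Set
open scoped ENNReal

set_option linter.unusedVariables false
set_option maxHeartbeats 1000000

namespace LqAux

/-- `x^q Γ(x) ≤ Γ(x+q)` for `x > 0`, `q ≥ 1`, via log-convexity of `Γ`. -/
theorem rpow_mul_gamma_le {x q : ℝ} (hx : 0 < x) (hq : 1 ≤ q) :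
    x ^ q * Real.Gamma x ≤ Real.Gamma (x + q) := by
  have hGx : 0 < Real.Gamma x := Real.Gamma_pos_of_pos hx
  have hGxq : 0 < Real.Gamma (x + q) := Real.Gamma_pos_of_pos (by linarith)
  rcases eq_or_lt_of_le hq with h1 | h1
  · rw [← h1, Real.rpow_one, ← Real.Gamma_add_one hx.ne']
  · have hq0 : 0 < q := lt_trans one_pos h1
    have ha : 0 < (q - 1) / q := div_pos (by linarith) hq0
    have hb : 0 < 1 / q := by positivity
    have hab : (q - 1) / q + 1 / q = 1 := by field_simp; ring
    have key := Real.Gamma_mul_add_mul_le_rpow_Gamma_mul_rpow_Gamma hx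
      (show (0:ℝ) < x + q by linarith) ha hb hab
    have harg : (q - 1) / q * x + 1 / q * (x + q) = x + 1 := by field_simp; ring
    rw [harg, Real.Gamma_add_one hx.ne'] at key
    have lkey := Real.log_le_log (by positivity) key
    rw [Real.log_mul hx.ne' hGx.ne',
      Real.log_mul (by positivity) (by positivity),
      Real.log_rpow hGx, Real.log_rpow hGxq] at lkey
    have l2 := mul_le_mul_of_nonneg_left lkey hq0.le
    have l3 : q * ((q - 1) / q * Real.log (Real.Gamma x) + 1 / q * Real.log (Real.Gamma (x + q)))
        = (q - 1) * Real.log (Real.Gamma x) + Real.log (Real.Gamma (x + q)) := by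
      field_simp
    rw [l3] at l2
    rw [← Real.exp_log (show (0:ℝ) < x ^ q * Real.Gamma x by positivity), ← Real.exp_log hGxq]
    apply Real.exp_le_exp.2
    rw [Real.log_mul (by positivity) hGx.ne', Real.log_rpow hx]
    nlinarith [l2]

/-- `Γ(q+1) ≤ q^q` for `q ≥ 1`. -/
theorem gamma_add_one_le : ∀ n : ℕ, ∀ q : ℝ, 1 ≤ q → q ≤ 2 + n → Real.Gamma (q + 1) ≤ q ^ q := by
  intro n
  induction n with
  | zero =>
    intro q hq1 hq2
    norm_num at hq2
    have hq0 : 0 < q := lt_of_lt_of_le one_pos hq1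
    -- step 1 : Γ(q+1) ≤ 2 ^ (q - 1)
    have step1 : Real.Gamma (q + 1) ≤ 2 ^ (q - 1) := by
      rcases eq_or_lt_of_le hq1 with h1 | h1
      · rw [← h1]; norm_num [Real.Gamma_two]
      rcases eq_or_lt_of_le hq2 with h2 | h2
      · rw [h2]
        have : Real.Gamma ((2:ℝ) + 1) = 2 := by
          rw [Real.Gamma_add_one (by norm_num), Real.Gamma_two]; norm_num
        norm_num [this]
      · have key := Real.Gamma_mul_add_mul_le_rpow_Gamma_mul_rpow_Gamma
          (show (0:ℝ) < 2 by norm_num) (show (0:ℝ) < 3 by norm_num)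
          (show 0 < 2 - q by linarith) (show 0 < q - 1 by linarith)
          (show (2 - q) + (q - 1) = 1 by ring)
        have harg : (2 - q) * 2 + (q - 1) * 3 = q + 1 := by ring
        rw [harg, Real.Gamma_two] at key
        have h3 : Real.Gamma (3:ℝ) = 2 := by
          rw [show (3:ℝ) = 2 + 1 by norm_num, Real.Gamma_add_one (by norm_num),
            Real.Gamma_two]; norm_num
        rw [h3] at key
        simpa using key
    refine step1.trans ?_
    -- step 2 : 2 ^ (q-1) ≤ q ^ q
    rw [Real.rpow_def_of_pos (by norm_num : (0:ℝ) < 2), Real.rpow_def_of_pos hq0]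
    apply Real.exp_le_exp.2
    have hlog2 : Real.log 2 ≤ 1 := by
      have := Real.log_le_sub_one_of_pos (show (0:ℝ) < 2 by norm_num); linarith
    have hlogq : 1 - 1 / q ≤ Real.log q := by
      have h := Real.log_le_sub_one_of_pos (show (0:ℝ) < 1 / q by positivity)
      rw [one_div, Real.log_inv] at h
      rw [one_div]; linarith
    have h4 : q - 1 ≤ Real.log q * q := by
      have := mul_le_mul_of_nonneg_right hlogq hq0.le
      have hqq : (1 - 1 / q) * q = q - 1 := by field_simp
      linarith [hqq ▸ this]
    nlinarith [mul_le_mul_of_nonneg_right hlog2 (show (0:ℝ) ≤ q - 1 by linarith)]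
  | succ n ih =>
    intro q hq1 hq2
    by_cases h : q ≤ 2 + n
    · exact ih q hq1 h
    · push_neg at h
      have hq0 : 0 < q := lt_of_lt_of_le one_pos hq1
      have hn : (0:ℝ) ≤ n := Nat.cast_nonneg n
      have hq1' : (1:ℝ) ≤ q - 1 := by linarith
      have hih := ih (q - 1) hq1' (by push_cast at hq2 ⊢; linarith)
      rw [sub_add_cancel] at hih
      have : Real.Gamma (q + 1) = q * Real.Gamma q := Real.Gamma_add_one hq0.ne'
      rw [this]
      have h2 : Real.Gamma q ≤ q ^ (q - 1) := by
        refine hih.trans ?_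
        exact Real.rpow_le_rpow (by linarith) (by linarith) (by linarith)
      calc q * Real.Gamma q ≤ q * q ^ (q - 1) := by
            exact mul_le_mul_of_nonneg_left h2 hq0.le
        _ = q ^ q := by
            have e : q ^ (1 + (q - 1)) = q * q ^ (q - 1) :=
              Real.rpow_one_add' hq0.le (show 1 + (q-1) ≠ 0 by intro hc; linarith)
            rw [← e]
            congr 1
            ring

theorem measB (d : ℕ) (c : ℝ) : MeasurableSet {x : Fin d → ℝ | ∑ i, |x i| < c} := by
  have hc : Continuous fun x : Fin d → ℝ => ∑ i, |x i| :=
    continuous_finset_sum _ fun i _ => (continuous_apply i).abs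
  exact measurableSet_lt hc.measurable measurable_const

theorem lintegral_ball_smul (d : ℕ) (s : ℝ) (g : (Fin d → ℝ) → ℝ≥0∞) (hg : Measurable g)
    (hhom : ∀ r : ℝ, 0 < r → ∀ x, g (r • x) = ENNReal.ofReal (r ^ s) * g x)
    {r : ℝ} (hr : 0 < r) :
    ∫⁻ x in {x : Fin d → ℝ | ∑ i, |x i| < r}, g x
      = ENNReal.ofReal (r ^ ((d : ℝ) + s)) * ∫⁻ x in {x : Fin d → ℝ | ∑ i, |x i| < 1}, g x := by
  set F : (Fin d → ℝ) → ℝ≥0∞ := ({y : Fin d → ℝ | ∑ i, |y i| < r}).indicator g with hF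
  have hFmeas : Measurable F := hg.indicator (measB d r)
  have key : ∀ x : Fin d → ℝ, F (r • x)
      = ENNReal.ofReal (r ^ s) * ({y : Fin d → ℝ | ∑ i, |y i| < 1}).indicator g x := by
    intro x
    have hsum : ∑ i, |(r • x) i| = r * ∑ i, |x i| := by
      simp [abs_mul, abs_of_pos hr, Finset.mul_sum]
    by_cases hx : ∑ i, |x i| < 1
    · have h1 : (r • x) ∈ {y : Fin d → ℝ | ∑ i, |y i| < r} := by
        simp only [mem_setOf_eq, hsum]
        calc r * ∑ i, |x i| < r * 1 := by exact (mul_lt_mul_iff_right₀ hr).2 hx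
          _ = r := mul_one r
      rw [hF, Set.indicator_of_mem h1, Set.indicator_of_mem (show x ∈ {y : Fin d → ℝ | ∑ i, |y i| < 1} from hx), hhom r hr x]
    · have hx' : (1:ℝ) ≤ ∑ i, |x i| := not_lt.1 hx
      have h1 : (r • x) ∉ {y : Fin d → ℝ | ∑ i, |y i| < r} := by
        simp only [mem_setOf_eq, hsum, not_lt]
        calc r = r * 1 := (mul_one r).symm
          _ ≤ r * ∑ i, |x i| := by exact (mul_le_mul_iff_right₀ hr).2 hx'
      rw [hF, Set.indicator_of_notMem h1, Set.indicator_of_notMem (show x ∉ {y : Fin d → ℝ | ∑ i, |y i| < 1} from hx), mul_zero]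
  have hmap : ∫⁻ y, F y ∂(Measure.map (r • ·) (volume : Measure (Fin d → ℝ)))
      = ∫⁻ x, F (r • x) := lintegral_map hFmeas (measurable_const_smul r)
  rw [Measure.map_addHaar_smul (volume : Measure (Fin d → ℝ)) hr.ne',
    lintegral_smul_measure] at hmap
  have hrank : Module.finrank ℝ (Fin d → ℝ) = d := Module.finrank_fin_fun ℝ
  rw [hrank] at hmap
  have hRHS : ∫⁻ x, F (r • x)
      = ENNReal.ofReal (r ^ s) * ∫⁻ x in {y : Fin d → ℝ | ∑ i, |y i| < 1}, g x := by
    rw [lintegral_congr key,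
      lintegral_const_mul _ (hg.indicator (measB d 1)),
      lintegral_indicator (measB d 1) g]
  rw [hRHS] at hmap
  have hleft : ∫⁻ y, F y = ∫⁻ x in {y : Fin d → ℝ | ∑ i, |y i| < r}, g x :=
    lintegral_indicator (measB d r) g
  rw [hleft] at hmap
  -- hmap : ofReal |(r^d)⁻¹| * ∫⁻ in Br = ofReal (r^s) * I1
  have hcancel : ENNReal.ofReal (r ^ d) * ENNReal.ofReal |((r : ℝ) ^ d)⁻¹| = 1 := by
    rw [abs_of_pos (by positivity), ← ENNReal.ofReal_mul (by positivity),
      mul_inv_cancel₀ (by positivity)]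
    simp
  calc ∫⁻ x in {y : Fin d → ℝ | ∑ i, |y i| < r}, g x
      = (ENNReal.ofReal (r ^ d) * ENNReal.ofReal |((r : ℝ) ^ d)⁻¹|) *
          ∫⁻ x in {y : Fin d → ℝ | ∑ i, |y i| < r}, g x := by rw [hcancel, one_mul]
    _ = ENNReal.ofReal (r ^ d) * (ENNReal.ofReal |((r : ℝ) ^ d)⁻¹| *
          ∫⁻ x in {y : Fin d → ℝ | ∑ i, |y i| < r}, g x) := by rw [mul_assoc]
    _ = ENNReal.ofReal (r ^ d) * (ENNReal.ofReal (r ^ s) *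
          ∫⁻ x in {y : Fin d → ℝ | ∑ i, |y i| < 1}, g x) := by rw [← hmap, smul_eq_mul]
    _ = ENNReal.ofReal (r ^ ((d : ℝ) + s)) *
          ∫⁻ x in {y : Fin d → ℝ | ∑ i, |y i| < 1}, g x := by
        rw [← mul_assoc, ← ENNReal.ofReal_mul (by positivity),
          Real.rpow_add hr, Real.rpow_natCast]

theorem exp_tail (a : ℝ) :
    ∫⁻ r in Ioi a, ENNReal.ofReal (Real.exp (-r)) = ENNReal.ofReal (Real.exp (-a)) := by
  rw [← ofReal_integral_eq_lintegral_ofReal (by simpa using (exp_neg_integrableOn_Ioi a one_pos).integrable)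
    (Filter.Eventually.of_forall fun r => (Real.exp_pos _).le), integral_exp_neg_Ioi]

theorem laplace (d : ℕ) (s : ℝ) (hs : 0 ≤ s) (g : (Fin d → ℝ) → ℝ≥0∞) (hg : Measurable g)
    (hhom : ∀ r : ℝ, 0 < r → ∀ x, g (r • x) = ENNReal.ofReal (r ^ s) * g x) :
    ∫⁻ x, ENNReal.ofReal (Real.exp (-∑ i, |x i|)) * g x
      = ENNReal.ofReal (Real.Gamma ((d : ℝ) + s + 1)) *
        ∫⁻ x in {x : Fin d → ℝ | ∑ i, |x i| < 1}, g x := by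
  classical
  have ha : Measurable fun x : Fin d → ℝ => ∑ i, |x i| :=
    (continuous_finset_sum _ fun i _ => (continuous_apply i).abs).measurable
  have ha0 : ∀ x : Fin d → ℝ, 0 ≤ ∑ i, |x i| := fun x =>
    Finset.sum_nonneg fun i _ => abs_nonneg _
  have m1 : Measurable fun r : ℝ => ENNReal.ofReal (Real.exp (-r)) :=
    ENNReal.measurable_ofReal.comp (Real.measurable_exp.comp measurable_neg)
  have m2 : Measurable fun r : ℝ => ENNReal.ofReal (Real.exp (-r) * r ^ ((d:ℝ) + s)) :=
    ENNReal.measurable_ofReal.comp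
      ((Real.measurable_exp.comp measurable_neg).mul (measurable_id.pow measurable_const))
  set Φ : (Fin d → ℝ) → ℝ → ℝ≥0∞ :=
    fun x r => if ∑ i, |x i| < r then ENNReal.ofReal (Real.exp (-r)) * g x else 0 with hΦ
  -- step 2 : pointwise identity
  have step2 : ∀ x : Fin d → ℝ,
      ENNReal.ofReal (Real.exp (-∑ i, |x i|)) * g x = ∫⁻ r in Ioi (0:ℝ), Φ x r := by
    intro x
    have e1 : ∫⁻ r in Ioi (0:ℝ), Φ x r
        = ∫⁻ r in Ioi (0:ℝ), (Ioi (∑ i, |x i|)).indicator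
            (fun r => ENNReal.ofReal (Real.exp (-r)) * g x) r := by
      refine lintegral_congr fun r => ?_
      rw [Set.indicator_apply]
      simp only [mem_Ioi, hΦ]
    rw [e1, lintegral_indicator measurableSet_Ioi, Measure.restrict_restrict measurableSet_Ioi,
      Set.Ioi_inter_Ioi, max_eq_left (ha0 x),
      lintegral_mul_const _ m1, exp_tail]
  rw [lintegral_congr step2]
  -- swap
  have hswap : ∫⁻ x, ∫⁻ r in Ioi (0:ℝ), Φ x r
      = ∫⁻ r in Ioi (0:ℝ), ∫⁻ x, Φ x r := by
    apply lintegral_lintegral_swap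
    apply Measurable.aemeasurable
    have : (Function.uncurry Φ) = fun p : (Fin d → ℝ) × ℝ =>
        if ∑ i, |p.1 i| < p.2 then ENNReal.ofReal (Real.exp (-p.2)) * g p.1 else 0 := rfl
    rw [this]
    exact Measurable.ite (measurableSet_lt (ha.comp measurable_fst) measurable_snd)
      (((ENNReal.measurable_ofReal.comp (Real.measurable_exp.comp measurable_neg)).comp
        measurable_snd).mul (hg.comp measurable_fst)) measurable_const
  rw [hswap]
  -- inner integral for r > 0
  have step4 : ∀ r ∈ Ioi (0:ℝ), ∫⁻ x, Φ x r
      = ENNReal.ofReal (Real.exp (-r) * r ^ ((d:ℝ) + s)) *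
        ∫⁻ x in {x : Fin d → ℝ | ∑ i, |x i| < 1}, g x := by
    intro r hr
    rw [mem_Ioi] at hr
    have e2 : ∀ x : Fin d → ℝ, Φ x r = ENNReal.ofReal (Real.exp (-r)) *
        ({x : Fin d → ℝ | ∑ i, |x i| < r}.indicator g x) := by
      intro x
      by_cases hx : ∑ i, |x i| < r
      · rw [Set.indicator_of_mem (show x ∈ {x : Fin d → ℝ | ∑ i, |x i| < r} from hx)]
        simp only [hΦ, if_pos hx]
      · rw [Set.indicator_of_notMem (show x ∉ {x : Fin d → ℝ | ∑ i, |x i| < r} from hx),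
          mul_zero]
        simp only [hΦ, if_neg hx]
    rw [lintegral_congr e2, lintegral_const_mul _ (hg.indicator (measB d r)),
      lintegral_indicator (measB d r) g, lintegral_ball_smul d s g hg hhom hr,
      ← mul_assoc, ← ENNReal.ofReal_mul (Real.exp_pos _).le]
  rw [setLIntegral_congr_fun measurableSet_Ioi (fun r hr => step4 r hr)]
  rw [lintegral_mul_const _ m2]
  congr 1
  rw [← ofReal_integral_eq_lintegral_ofReal]
  · rw [Real.Gamma_eq_integral (show 0 < (d:ℝ) + s + 1 by positivity)]
    congr 1
    refine setIntegral_congr_fun measurableSet_Ioi fun r hr => ?_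
    norm_num
  · have := Real.GammaIntegral_convergent (show 0 < (d:ℝ) + s + 1 by positivity)
    simpa using this.integrable
  · refine (ae_restrict_iff' measurableSet_Ioi).2 (Filter.Eventually.of_forall fun r hr => ?_)
    exact mul_nonneg (Real.exp_pos _).le (Real.rpow_nonneg (le_of_lt hr) _)

theorem integrable_even {f : ℝ → ℝ} (hf : IntegrableOn f (Ioi (0:ℝ))) :
    Integrable fun t : ℝ => f |t| := by
  have hF : Integrable ((Ioi (0:ℝ)).indicator f) := (integrable_indicator_iff measurableSet_Ioi).2 hf
  have hFn : Integrable fun t : ℝ => (Ioi (0:ℝ)).indicator f (-t) := hF.comp_neg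
  have h0 : ∀ᵐ t : ℝ, t ≠ (0:ℝ) := by
    rw [ae_iff]
    simpa using Real.volume_singleton (a := (0:ℝ))
  have heq : (fun t : ℝ => (Ioi (0:ℝ)).indicator f t + (Ioi (0:ℝ)).indicator f (-t))
      =ᵐ[volume] fun t : ℝ => f |t| := by
    filter_upwards [h0] with t ht
    rcases lt_or_gt_of_ne ht with h | h
    · rw [Set.indicator_of_notMem (by simpa using not_lt.2 h.le),
        Set.indicator_of_mem (by simpa using h), abs_of_neg h, zero_add]
    · rw [Set.indicator_of_mem (by simpa using h),
        Set.indicator_of_notMem (by simp [not_lt, h.le]), abs_of_pos h, add_zero]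
  exact (hF.add hFn).congr heq

theorem integrableOn_exp_neg : IntegrableOn (fun t : ℝ => Real.exp (-t)) (Ioi (0:ℝ)) := by
  simpa using exp_neg_integrableOn_Ioi (0:ℝ) one_pos

theorem integrable_exp_abs : Integrable fun t : ℝ => Real.exp (-|t|) :=
  integrable_even integrableOn_exp_neg

theorem integral_exp_abs : ∫ t : ℝ, Real.exp (-|t|) = 2 := by
  rw [integral_comp_abs (f := fun t => Real.exp (-t)), integral_exp_neg_Ioi]
  norm_num

theorem integrable_rpow_exp_abs {q : ℝ} (hq : 0 ≤ q) :
    Integrable fun t : ℝ => Real.exp (-|t|) * |t| ^ q := by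
  apply integrable_even (f := fun t => Real.exp (-t) * t ^ q)
  have := Real.GammaIntegral_convergent (show 0 < q + 1 by linarith)
  simpa using this

theorem integral_rpow_exp_abs {q : ℝ} (hq : 0 ≤ q) :
    ∫ t : ℝ, Real.exp (-|t|) * |t| ^ q = 2 * Real.Gamma (q + 1) := by
  rw [integral_comp_abs (f := fun t => Real.exp (-t) * t ^ q)]
  congr 1
  rw [Real.Gamma_eq_integral (show 0 < q + 1 by linarith)]
  norm_num

theorem exp_sum_eq (d : ℕ) (x : Fin d → ℝ) :
    Real.exp (-∑ i, |x i|) = ∏ i, Real.exp (-|x i|) := by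
  rw [← Real.exp_sum]
  congr 1
  rw [← Finset.sum_neg_distrib]

theorem integrable_exp_sum (d : ℕ) :
    Integrable fun x : Fin d → ℝ => Real.exp (-∑ i, |x i|) := by
  have := Integrable.fintype_prod (f := fun _ : Fin d => fun t : ℝ => Real.exp (-|t|))
    fun _ => integrable_exp_abs
  exact this.congr (Filter.Eventually.of_forall fun x => (exp_sum_eq d x).symm)

theorem integral_exp_sum (d : ℕ) :
    ∫ x : Fin d → ℝ, Real.exp (-∑ i, |x i|) = 2 ^ d := by
  rw [integral_congr_ae (Filter.Eventually.of_forall fun x => exp_sum_eq d x),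
    integral_fintype_prod_volume_eq_prod (f := fun _ : Fin d => fun t : ℝ => Real.exp (-|t|))]
  simp [integral_exp_abs]

section withi
variable (d : ℕ) (q : ℝ) (i : Fin d)

/-- the factor functions -/
noncomputable def fj (j : Fin d) : ℝ → ℝ :=
  fun t => Real.exp (-|t|) * (if j = i then |t| ^ q else 1)

theorem fj_prod (x : Fin d → ℝ) :
    ∏ j, fj d q i j (x j) = Real.exp (-∑ k, |x k|) * |x i| ^ q := by
  unfold fj
  rw [Finset.prod_mul_distrib, ← exp_sum_eq d x]
  congr 1
  rw [Finset.prod_ite_eq' Finset.univ i (fun j => |x j| ^ q)]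
  simp

theorem fj_integrable (hq : 0 ≤ q) (j : Fin d) : Integrable (fj d q i j) := by
  unfold fj
  by_cases h : j = i
  · simpa [h] using integrable_rpow_exp_abs hq
  · simpa [h] using integrable_exp_abs

theorem fj_integral (hq : 0 ≤ q) (j : Fin d) :
    ∫ t : ℝ, fj d q i j t = if j = i then 2 * Real.Gamma (q + 1) else 2 := by
  unfold fj
  by_cases h : j = i
  · simpa [h] using integral_rpow_exp_abs hq
  · simpa [h] using integral_exp_abs

theorem integrable_term (hq : 0 ≤ q) :
    Integrable fun x : Fin d → ℝ => Real.exp (-∑ k, |x k|) * |x i| ^ q := by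
  have := Integrable.fintype_prod (f := fun j : Fin d => fj d q i j)
    fun j => fj_integrable d q i hq j
  exact this.congr (Filter.Eventually.of_forall fun x => fj_prod d q i x)

theorem integral_term (hd : 0 < d) (hq : 0 ≤ q) :
    ∫ x : Fin d → ℝ, Real.exp (-∑ k, |x k|) * |x i| ^ q
      = 2 ^ d * Real.Gamma (q + 1) := by
  rw [integral_congr_ae (Filter.Eventually.of_forall fun x => (fj_prod d q i x).symm),
    integral_fintype_prod_volume_eq_prod (f := fun j : Fin d => fj d q i j)]
  have : ∀ j, ∫ t : ℝ, fj d q i j t = if j = i then 2 * Real.Gamma (q + 1) else 2 :=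
    fj_integral d q i hq
  rw [Finset.prod_congr rfl fun j _ => this j]
  rw [← Finset.mul_prod_erase Finset.univ _ (Finset.mem_univ i), if_pos rfl]
  have h2 : ∏ j ∈ Finset.univ.erase i, (if j = i then 2 * Real.Gamma (q + 1) else 2)
      = 2 ^ (d - 1) := by
    rw [Finset.prod_congr rfl fun j hj => if_neg (Finset.ne_of_mem_erase hj)]
    rw [Finset.prod_const, Finset.card_erase_of_mem (Finset.mem_univ i)]
    simp
  rw [h2]
  have h3 : (2:ℝ) ^ d = 2 * 2 ^ (d - 1) := by
    rw [← pow_succ']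
    congr 1
    omega
  rw [h3]; ring

end withi

theorem integrable_sum_term (d : ℕ) (q : ℝ) (hq : 0 ≤ q) :
    Integrable fun x : Fin d → ℝ => Real.exp (-∑ k, |x k|) * ∑ i, |x i| ^ q := by
  have := integrable_finset_sum (μ := (volume : Measure (Fin d → ℝ))) Finset.univ
    (fun i (_ : i ∈ Finset.univ) => integrable_term d q i hq)
  refine this.congr (Filter.Eventually.of_forall fun x => ?_)
  simp only []
  rw [← Finset.mul_sum]

theorem integral_sum_term (d : ℕ) (q : ℝ) (hd : 0 < d) (hq : 0 ≤ q) :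
    ∫ x : Fin d → ℝ, Real.exp (-∑ k, |x k|) * ∑ i, |x i| ^ q
      = d * 2 ^ d * Real.Gamma (q + 1) := by
  have e : ∀ x : Fin d → ℝ, Real.exp (-∑ k, |x k|) * ∑ i, |x i| ^ q
      = ∑ i, Real.exp (-∑ k, |x k|) * |x i| ^ q := fun x => Finset.mul_sum _ _ _
  rw [integral_congr_ae (Filter.Eventually.of_forall e),
    integral_finset_sum Finset.univ (fun i _ => integrable_term d q i hq)]
  rw [Finset.sum_congr rfl fun i _ => integral_term d q i hd hq]
  simp [Finset.card_univ]
  ring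




-- derived facts

theorem gamma_le (q : ℝ) (hq : 1 ≤ q) : Real.Gamma (q + 1) ≤ q ^ q := by
  refine gamma_add_one_le ⌈q⌉₊ q hq ?_
  have h1 : q ≤ (⌈q⌉₊ : ℝ) := Nat.le_ceil q
  have h2 : (0:ℝ) ≤ (⌈q⌉₊ : ℝ) := Nat.cast_nonneg _
  linarith

/-- the `ℓ^q`-sum integrand as an `ℝ≥0∞`-valued function -/
noncomputable def g2 (d : ℕ) (q : ℝ) : (Fin d → ℝ) → ℝ≥0∞ :=
  fun x => ENNReal.ofReal (∑ i, |x i| ^ q)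

theorem g2_meas (d : ℕ) (q : ℝ) : Measurable (g2 d q) := by
  apply ENNReal.measurable_ofReal.comp
  exact Finset.measurable_sum Finset.univ fun i _ =>
    ((measurable_pi_apply i).abs.pow measurable_const)

theorem g2_hom (d : ℕ) (q : ℝ) (hq : 0 < q) : ∀ r : ℝ, 0 < r → ∀ x : Fin d → ℝ,
    g2 d q (r • x) = ENNReal.ofReal (r ^ q) * g2 d q x := by
  intro r hr x
  unfold g2
  have e : ∀ i : Fin d, |(r • x) i| ^ q = r ^ q * |x i| ^ q := by
    intro i
    have : |(r • x) i| = r * |x i| := by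
      simp [abs_mul, abs_of_pos hr]
    rw [this, Real.mul_rpow hr.le (abs_nonneg _)]
  rw [Finset.sum_congr rfl fun i _ => e i, ← Finset.mul_sum,
    ENNReal.ofReal_mul (Real.rpow_nonneg hr.le q)]

-- key lintegral computations
theorem lint_b (d : ℕ) :
    ∫⁻ x : Fin d → ℝ, ENNReal.ofReal (Real.exp (-∑ i, |x i|)) = ENNReal.ofReal (2 ^ d) := by
  rw [← ofReal_integral_eq_lintegral_ofReal (integrable_exp_sum d)
    (Filter.Eventually.of_forall fun x => (Real.exp_pos _).le), integral_exp_sum d]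

theorem lint_a (d : ℕ) (q : ℝ) (hd : 0 < d) (hq : 0 ≤ q) :
    ∫⁻ x : Fin d → ℝ, ENNReal.ofReal (Real.exp (-∑ i, |x i|)) * g2 d q x
      = ENNReal.ofReal (d * 2 ^ d * Real.Gamma (q + 1)) := by
  have e : ∀ x : Fin d → ℝ, ENNReal.ofReal (Real.exp (-∑ i, |x i|)) * g2 d q x
      = ENNReal.ofReal (Real.exp (-∑ i, |x i|) * ∑ i, |x i| ^ q) := by
    intro x
    rw [ENNReal.ofReal_mul (Real.exp_pos _).le]
    rfl
  rw [lintegral_congr e,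
    ← ofReal_integral_eq_lintegral_ofReal (integrable_sum_term d q hq)
      (Filter.Eventually.of_forall fun x => mul_nonneg (Real.exp_pos _).le
        (Finset.sum_nonneg fun i _ => Real.rpow_nonneg (abs_nonneg _) q)),
    integral_sum_term d q hd hq]

-- volume of the ball
theorem vol_ball (d : ℕ) :
    volume {x : Fin d → ℝ | ∑ i, |x i| < 1}
      = ENNReal.ofReal (2 ^ d / Real.Gamma (d + 1)) := by
  have hG : 0 < Real.Gamma ((d:ℝ) + 1) := Real.Gamma_pos_of_pos (by positivity)
  have h := laplace d 0 le_rfl (fun _ => 1) measurable_const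
    (fun r hr x => by rw [Real.rpow_zero]; simp)
  simp only [mul_one, lintegral_one, Measure.restrict_apply_univ] at h
  rw [lint_b d] at h
  have harg : (d:ℝ) + 0 + 1 = (d:ℝ) + 1 := by ring
  rw [harg] at h
  -- h : ofReal (2^d) = ofReal Γ(d+1) * volume B
  have hcancel : ENNReal.ofReal (Real.Gamma ((d:ℝ)+1))⁻¹ * ENNReal.ofReal (Real.Gamma ((d:ℝ)+1))
      = 1 := by
    rw [← ENNReal.ofReal_mul (by positivity), inv_mul_cancel₀ hG.ne', ENNReal.ofReal_one]
  calc volume {x : Fin d → ℝ | ∑ i, |x i| < 1}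
      = (ENNReal.ofReal (Real.Gamma ((d:ℝ)+1))⁻¹ * ENNReal.ofReal (Real.Gamma ((d:ℝ)+1))) *
          volume {x : Fin d → ℝ | ∑ i, |x i| < 1} := by rw [hcancel, one_mul]
    _ = ENNReal.ofReal (Real.Gamma ((d:ℝ)+1))⁻¹ * (ENNReal.ofReal (Real.Gamma ((d:ℝ)+1)) *
          volume {x : Fin d → ℝ | ∑ i, |x i| < 1}) := by rw [mul_assoc]
    _ = ENNReal.ofReal (Real.Gamma ((d:ℝ)+1))⁻¹ * ENNReal.ofReal (2 ^ d) := by rw [← h]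
    _ = ENNReal.ofReal (2 ^ d / Real.Gamma ((d:ℝ)+1)) := by
        rw [← ENNReal.ofReal_mul (by positivity)]
        congr 1
        field_simp

theorem lint_ball_g2 (d : ℕ) (q : ℝ) (hd : 0 < d) (hq : 0 < q) :
    ∫⁻ x in {x : Fin d → ℝ | ∑ i, |x i| < 1}, g2 d q x
      = ENNReal.ofReal (d * 2 ^ d * Real.Gamma (q + 1) / Real.Gamma ((d:ℝ) + q + 1)) := by
  have hG : 0 < Real.Gamma ((d:ℝ) + q + 1) := Real.Gamma_pos_of_pos (by positivity)
  have h := laplace d q hq.le (g2 d q) (g2_meas d q) (g2_hom d q hq)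
  rw [lint_a d q hd hq.le] at h
  have hcancel : ENNReal.ofReal (Real.Gamma ((d:ℝ)+q+1))⁻¹ *
      ENNReal.ofReal (Real.Gamma ((d:ℝ)+q+1)) = 1 := by
    rw [← ENNReal.ofReal_mul (by positivity), inv_mul_cancel₀ hG.ne', ENNReal.ofReal_one]
  calc ∫⁻ x in {x : Fin d → ℝ | ∑ i, |x i| < 1}, g2 d q x
      = (ENNReal.ofReal (Real.Gamma ((d:ℝ)+q+1))⁻¹ * ENNReal.ofReal (Real.Gamma ((d:ℝ)+q+1))) *
          ∫⁻ x in {x : Fin d → ℝ | ∑ i, |x i| < 1}, g2 d q x := by rw [hcancel, one_mul]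
    _ = ENNReal.ofReal (Real.Gamma ((d:ℝ)+q+1))⁻¹ * (ENNReal.ofReal (Real.Gamma ((d:ℝ)+q+1)) *
          ∫⁻ x in {x : Fin d → ℝ | ∑ i, |x i| < 1}, g2 d q x) := by rw [mul_assoc]
    _ = ENNReal.ofReal (Real.Gamma ((d:ℝ)+q+1))⁻¹ *
          ENNReal.ofReal (d * 2 ^ d * Real.Gamma (q + 1)) := by rw [← h]
    _ = ENNReal.ofReal (d * 2 ^ d * Real.Gamma (q + 1) / Real.Gamma ((d:ℝ) + q + 1)) := by
        rw [← ENNReal.ofReal_mul (by positivity)]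
        congr 1
        field_simp

end LqAux

open LqAux

/-- The uniform distribution on the open ℓ¹-ball `B₁ᵈ = {x : ‖x‖₁ < 1}` in `ℝᵈ`. -/
noncomputable def uniformBall (d : ℕ) : Measure (Fin d → ℝ) :=
  ProbabilityTheory.cond volume {x | ∑ i, |x i| < 1}

/-- If `U` is uniform on the open ℓ¹-ball in `ℝᵈ` and `q ∈ [1, ∞)`, then
`E[‖U‖_q] ≤ q d^{1/q} / (d+1)`. -/
theorem lq_moment_uniformBall (d : ℕ) (hd : 0 < d) (q : ℝ) (hq : 1 ≤ q) :
    ∫ u, (∑ i, |u i| ^ q) ^ (1 / q) ∂uniformBall d ≤ q * (d : ℝ) ^ (1 / q) / ((d : ℝ) + 1) := by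
  classical
  have hq0 : 0 < q := lt_of_lt_of_le one_pos hq
  have hd1 : (0:ℝ) < (d:ℝ) := by exact_mod_cast hd
  set B : Set (Fin d → ℝ) := {x | ∑ i, |x i| < 1} with hB
  set V : ℝ≥0∞ := volume B with hVdef
  have hV : V = ENNReal.ofReal (2 ^ d / Real.Gamma (d + 1)) := vol_ball d
  have hGd : 0 < Real.Gamma ((d:ℝ) + 1) := Real.Gamma_pos_of_pos (by positivity)
  have hV0 : V ≠ 0 := by
    rw [hV]; exact (ENNReal.ofReal_pos.2 (by positivity)).ne'
  have hVtop : V ≠ ⊤ := by rw [hV]; exact ENNReal.ofReal_ne_top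
  have hμ : uniformBall d = V⁻¹ • (volume.restrict B) := rfl
  have hprob : IsProbabilityMeasure (uniformBall d) := by
    constructor
    rw [hμ, Measure.smul_apply, Measure.restrict_apply_univ, smul_eq_mul,
      ENNReal.inv_mul_cancel hV0 hVtop]
  set μ := uniformBall d
  set G : (Fin d → ℝ) → ℝ := fun u => ∑ i, |u i| ^ q with hG
  set F : (Fin d → ℝ) → ℝ := fun u => G u ^ (1 / q) with hF
  have hGmeas : Measurable G :=
    Finset.measurable_sum Finset.univ fun i _ => ((measurable_pi_apply i).abs.pow measurable_const)
  have hFmeas : Measurable F := hGmeas.pow measurable_const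
  have hGnn : ∀ u, 0 ≤ G u := fun u => Finset.sum_nonneg fun i _ =>
    Real.rpow_nonneg (abs_nonneg _) q
  have hFnn : ∀ u, 0 ≤ F u := fun u => Real.rpow_nonneg (hGnn u) _
  -- the Bochner integral as a lintegral
  have h1 : ∫ u, F u ∂μ = (∫⁻ u, ENNReal.ofReal (F u) ∂μ).toReal :=
    integral_eq_lintegral_of_nonneg_ae (Filter.Eventually.of_forall hFnn)
      hFmeas.aestronglyMeasurable
  -- Jensen via Lp-norm monotonicity
  set p : ℝ≥0∞ := ENNReal.ofReal q with hp
  have hp1 : (1:ℝ≥0∞) ≤ p := by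
    rw [hp, ← ENNReal.ofReal_one]
    exact ENNReal.ofReal_le_ofReal hq
  have hp0 : p ≠ 0 := by
    intro hc; rw [hc] at hp1; simp at hp1
  have hptop : p ≠ ⊤ := ENNReal.ofReal_ne_top
  have e1 : eLpNorm F 1 μ = ∫⁻ u, ENNReal.ofReal (F u) ∂μ := by
    rw [eLpNorm_one_eq_lintegral_enorm]
    exact lintegral_congr fun u => Real.enorm_eq_ofReal (hFnn u)
  have e2 : eLpNorm F p μ = (∫⁻ u, ENNReal.ofReal (G u) ∂μ) ^ (1/q) := by
    rw [eLpNorm_eq_lintegral_rpow_enorm_toReal hp0 hptop]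
    rw [ENNReal.toReal_ofReal hq0.le]
    congr 1
    refine lintegral_congr fun u => ?_
    rw [Real.enorm_eq_ofReal (hFnn u),
      ENNReal.ofReal_rpow_of_nonneg (hFnn u) hq0.le]
    congr 1
    rw [hF]
    simp only []
    rw [← Real.rpow_mul (hGnn u), one_div, inv_mul_cancel₀ hq0.ne', Real.rpow_one]
  have mono := eLpNorm_le_eLpNorm_of_exponent_le hp1 hFmeas.aestronglyMeasurable (μ := μ)
  rw [e1, e2] at mono
  -- compute the q-th moment integral
  have e3 : ∫⁻ u, ENNReal.ofReal (G u) ∂μ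
      = ENNReal.ofReal ((d:ℝ) * Real.Gamma (q+1) * Real.Gamma ((d:ℝ)+1) /
          Real.Gamma ((d:ℝ) + q + 1)) := by
    have : ∫⁻ u, ENNReal.ofReal (G u) ∂μ = V⁻¹ * ∫⁻ u in B, g2 d q u := by
      rw [hμ, lintegral_smul_measure]
      rfl
    rw [this, lint_ball_g2 d q hd hq0]
    have hVinv : V⁻¹ = ENNReal.ofReal (Real.Gamma ((d:ℝ)+1) / 2 ^ d) := by
      rw [hV, ← ENNReal.ofReal_inv_of_pos (by positivity)]
      congr 1
      field_simp
    rw [hVinv, ← ENNReal.ofReal_mul (by positivity)]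
    congr 1
    have h2d : (2:ℝ) ^ d ≠ 0 := by positivity
    have hGq : 0 < Real.Gamma ((d:ℝ) + q + 1) := Real.Gamma_pos_of_pos (by positivity)
    field_simp
  rw [e3] at mono
  -- the Gamma inequality
  have key : (d:ℝ) * Real.Gamma (q+1) * Real.Gamma ((d:ℝ)+1) / Real.Gamma ((d:ℝ) + q + 1)
      ≤ (d:ℝ) * q ^ q / ((d:ℝ)+1) ^ q := by
    have hA : ((d:ℝ)+1) ^ q * Real.Gamma ((d:ℝ)+1) ≤ Real.Gamma ((d:ℝ) + q + 1) := by
      have := rpow_mul_gamma_le (x := (d:ℝ)+1) (q := q) (by positivity) hq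
      calc ((d:ℝ)+1) ^ q * Real.Gamma ((d:ℝ)+1) ≤ Real.Gamma (((d:ℝ)+1) + q) := this
        _ = Real.Gamma ((d:ℝ) + q + 1) := by ring_nf
    have hBq : Real.Gamma (q+1) ≤ q ^ q := gamma_le q hq
    have hGq : 0 < Real.Gamma ((d:ℝ) + q + 1) := Real.Gamma_pos_of_pos (by positivity)
    have hGq1 : 0 < Real.Gamma (q+1) := Real.Gamma_pos_of_pos (by positivity)
    have hpow : (0:ℝ) < ((d:ℝ)+1) ^ q := Real.rpow_pos_of_pos (by positivity) q
    rw [div_le_div_iff₀ hGq (by positivity)]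
    calc (d:ℝ) * Real.Gamma (q+1) * Real.Gamma ((d:ℝ)+1) * ((d:ℝ)+1) ^ q
        ≤ (d:ℝ) * q ^ q * Real.Gamma ((d:ℝ)+1) * ((d:ℝ)+1) ^ q := by
          have h := mul_le_mul_of_nonneg_right (mul_le_mul_of_nonneg_left hBq hd1.le)
            (mul_nonneg hGd.le hpow.le)
          calc (d:ℝ) * Real.Gamma (q+1) * Real.Gamma ((d:ℝ)+1) * ((d:ℝ)+1) ^ q
              = ((d:ℝ) * Real.Gamma (q+1)) * (Real.Gamma ((d:ℝ)+1) * ((d:ℝ)+1) ^ q) := by ring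
            _ ≤ ((d:ℝ) * q ^ q) * (Real.Gamma ((d:ℝ)+1) * ((d:ℝ)+1) ^ q) := h
            _ = (d:ℝ) * q ^ q * Real.Gamma ((d:ℝ)+1) * ((d:ℝ)+1) ^ q := by ring
      _ ≤ (d:ℝ) * q ^ q * Real.Gamma ((d:ℝ) + q + 1) := by
          have h := mul_le_mul_of_nonneg_left hA
            (show (0:ℝ) ≤ (d:ℝ) * q ^ q by positivity)
          calc (d:ℝ) * q ^ q * Real.Gamma ((d:ℝ)+1) * ((d:ℝ)+1) ^ q
              = (d:ℝ) * q ^ q * (((d:ℝ)+1) ^ q * Real.Gamma ((d:ℝ)+1)) := by ring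
            _ ≤ (d:ℝ) * q ^ q * Real.Gamma ((d:ℝ) + q + 1) := h
  -- real rpow computation
  have hfinal : (((d:ℝ) * q ^ q / ((d:ℝ)+1) ^ q) : ℝ) ^ (1/q)
      = q * (d:ℝ) ^ (1/q) / ((d:ℝ)+1) := by
    have h1' : (0:ℝ) ≤ (d:ℝ) * q ^ q := by positivity
    have h2' : (0:ℝ) ≤ ((d:ℝ)+1) ^ q := by positivity
    rw [Real.div_rpow h1' h2', Real.mul_rpow hd1.le (by positivity), one_div,
      Real.rpow_rpow_inv hq0.le hq0.ne', Real.rpow_rpow_inv (by positivity) hq0.ne']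
    ring
  -- chain everything
  have chain : ∫⁻ u, ENNReal.ofReal (F u) ∂μ
      ≤ ENNReal.ofReal (q * (d:ℝ) ^ (1/q) / ((d:ℝ)+1)) := by
    refine mono.trans ?_
    rw [← hfinal, ← ENNReal.ofReal_rpow_of_nonneg (by positivity) (by positivity)]
    exact ENNReal.rpow_le_rpow (ENNReal.ofReal_le_ofReal key) (by positivity)
  rw [h1]
  calc (∫⁻ u, ENNReal.ofReal (F u) ∂μ).toReal
      ≤ (ENNReal.ofReal (q * (d:ℝ) ^ (1/q) / ((d:ℝ)+1))).toReal :=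
        ENNReal.toReal_mono ENNReal.ofReal_ne_top chain
    _ = q * (d:ℝ) ^ (1/q) / ((d:ℝ)+1) := ENNReal.toReal_ofReal (by positivity)
end

section
/- Let f : ℝ^d → ℝ be L-Lipschitz with respect to the ℓ_q-norm, h > 0, and let U be uniform on the ℓ1-ball B_1^d. Define f_h(x) = E[f(x + hU)]. Then for all x, |f_h(x) - f(x)| ≤ L·h·E[||U||_q], and in particular |f_h(x) - f(x)| ≤ L·h·q·d^{1/q}/(d+1) for q ∈ [1, ∞). -/
open MeasureTheory ProbabilityTheory

open Real Set Filter Topology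

lemma gamma_slope_aux {q : ℝ} (hq : 1 ≤ q) :
    Real.Gamma (1 + q) ≤ q ^ q := by
  have hq0 : 0 < q := by linarith
  have hc := Real.convexOn_log_Gamma
  -- slope(1, 1+q) ≤ slope(q, 1+q)
  have h1 : (1:ℝ) ∈ Ioi (0:ℝ) := by norm_num
  have hqm : q ∈ Ioi (0:ℝ) := hq0
  have ha : (1 + q) ∈ Ioi (0:ℝ) := by simp; linarith
  have key := hc.secant_mono (a := 1 + q) (x := 1) (y := q) ha h1 hqm
    (by intro h; linarith [h]) (by intro h; linarith [h]) hq
  have hlog1 : (Real.log ∘ Real.Gamma) 1 = 0 := by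
    simp [Real.Gamma_one]
  have hstep : (Real.log ∘ Real.Gamma) (1 + q) = Real.log q + (Real.log ∘ Real.Gamma) q := by
    have := Real.Gamma_add_one (ne_of_gt hq0)
    simp only [Function.comp_apply, add_comm 1 q] at *
    rw [this, Real.log_mul (ne_of_gt hq0) (ne_of_gt (Real.Gamma_pos_of_pos hq0))]
  rw [hlog1] at key
  -- key : (0 - f(1+q))/(1 - (1+q)) ≤ (f q - f (1+q))/(q - (1+q))
  have h2 : (Real.log ∘ Real.Gamma) (1 + q) ≤ q * Real.log q := by
    have e1 : (1:ℝ) - (1 + q) = -q := by ring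
    have e2 : q - (1 + q) = -1 := by ring
    rw [e1, e2, hstep] at key
    have : (0 - (Real.log q + (Real.log ∘ Real.Gamma) q)) / (-q)
        = (Real.log q + (Real.log ∘ Real.Gamma) q) / q := by ring
    rw [this] at key
    have key' := (div_le_iff₀ hq0).1 key
    rw [hstep]
    nlinarith [key']
  calc Real.Gamma (1 + q) = Real.exp ((Real.log ∘ Real.Gamma) (1 + q)) := by
        simp only [Function.comp_apply]
        rw [Real.exp_log (Real.Gamma_pos_of_pos (by linarith))]
    _ ≤ Real.exp (q * Real.log q) := Real.exp_le_exp.2 h2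
    _ = q ^ q := by rw [Real.rpow_def_of_pos hq0]; ring_nf

lemma gamma_slope_aux2 {q : ℝ} (hq : 1 ≤ q) (c : ℝ) (hc1 : 1 ≤ c) :
    c ^ q * Real.Gamma c ≤ Real.Gamma (c + q) := by
  have hc0 : 0 < c := by linarith
  have hcv := Real.convexOn_log_Gamma
  have key := hcv.secant_mono (a := c) (x := c + 1) (y := c + q)
    (by exact hc0) (by simp only [Set.mem_Ioi]; linarith) (by simp only [Set.mem_Ioi]; linarith)
    (by intro h; linarith [h]) (by intro h; linarith [h]) (by linarith)
  have hstep : (Real.log ∘ Real.Gamma) (c + 1) = Real.log c + (Real.log ∘ Real.Gamma) c := by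
    have := Real.Gamma_add_one (ne_of_gt hc0)
    simp only [Function.comp_apply] at *
    rw [this, Real.log_mul (ne_of_gt hc0) (ne_of_gt (Real.Gamma_pos_of_pos hc0))]
  rw [hstep] at key
  have e1 : c + 1 - c = 1 := by ring
  have e2 : c + q - c = q := by ring
  rw [e1, e2] at key
  simp only [div_one] at key
  have h2 : q * Real.log c + (Real.log ∘ Real.Gamma) c ≤ (Real.log ∘ Real.Gamma) (c + q) := by
    have hq0 : 0 < q := by linarith
    have := (le_div_iff₀ hq0).1 (by linarith [key] : Real.log c ≤ ((Real.log ∘ Real.Gamma) (c + q) - (Real.log ∘ Real.Gamma) c) / q)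
    linarith
  calc c ^ q * Real.Gamma c
      = Real.exp (q * Real.log c + (Real.log ∘ Real.Gamma) c) := by
        rw [Real.exp_add, Real.rpow_def_of_pos hc0]
        simp only [Function.comp_apply]
        rw [Real.exp_log (Real.Gamma_pos_of_pos hc0), mul_comm (Real.log c) q]
    _ ≤ Real.exp ((Real.log ∘ Real.Gamma) (c + q)) := Real.exp_le_exp.2 h2
    _ = Real.Gamma (c + q) := by
        simp only [Function.comp_apply]
        rw [Real.exp_log (Real.Gamma_pos_of_pos (by linarith))]


lemma integrable_comp_abs' {f : ℝ → ℝ} (hf : IntegrableOn f (Ioi (0:ℝ))) :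
    Integrable (fun x => f |x|) := by
  have hfabs : IntegrableOn (fun x => f |x|) (Ioi 0) := by
    refine hf.congr_fun (fun x hx => ?_) measurableSet_Ioi
    rw [abs_eq_self.mpr (le_of_lt hx)]
  have int_Iic : IntegrableOn (fun x ↦ f |x|) (Iic 0) := by
    rw [← Measure.map_neg_eq_self (volume : Measure ℝ)]
    have m : MeasurableEmbedding fun x : ℝ => -x := (Homeomorph.neg ℝ).measurableEmbedding
    rw [m.integrableOn_map_iff]
    simp_rw [Function.comp_def, abs_neg, neg_preimage, neg_Iic, neg_zero]
    exact (integrableOn_Ici_iff_integrableOn_Ioi).mpr hfabs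
  have := int_Iic.union hfabs
  rwa [Iic_union_Ioi, integrableOn_univ] at this

lemma integrable_exp_neg_abs : Integrable (fun t : ℝ => Real.exp (-|t|)) := by
  apply integrable_comp_abs' (f := fun t => Real.exp (-t))
  simpa using exp_neg_integrableOn_Ioi (0:ℝ) one_pos

lemma integral_exp_neg_abs : ∫ t : ℝ, Real.exp (-|t|) = 2 := by
  rw [integral_comp_abs (f := fun t => Real.exp (-t)), integral_exp_neg_Ioi_zero]
  norm_num

lemma integrableOn_exp_neg_rpow {q : ℝ} (hq : 0 ≤ q) :
    IntegrableOn (fun t : ℝ => Real.exp (-t) * t ^ q) (Ioi (0:ℝ)) := by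
  have := Real.GammaIntegral_convergent (s := q + 1) (by linarith)
  simpa using this

lemma integrable_exp_neg_abs_rpow {q : ℝ} (hq : 0 ≤ q) :
    Integrable (fun t : ℝ => Real.exp (-|t|) * |t| ^ q) := by
  apply integrable_comp_abs' (f := fun t => Real.exp (-t) * t ^ q)
  exact integrableOn_exp_neg_rpow hq

lemma integral_exp_neg_abs_rpow {q : ℝ} (hq : 0 ≤ q) :
    ∫ t : ℝ, Real.exp (-|t|) * |t| ^ q = 2 * Real.Gamma (q + 1) := by
  rw [integral_comp_abs (f := fun t => Real.exp (-t) * t ^ q)]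
  rw [Real.Gamma_eq_integral (by linarith : (0:ℝ) < q + 1)]
  simp


lemma lintegral_exp_prod {d : ℕ} {q : ℝ} (hq : 0 ≤ q) (i : Fin d) :
    ∫⁻ u : Fin d → ℝ, ENNReal.ofReal (Real.exp (-∑ j, |u j|) * |u i| ^ q)
      = ENNReal.ofReal (2 ^ d * Real.Gamma (q + 1)) := by
  set f : Fin d → ℝ → ℝ := fun j t => Real.exp (-|t|) * (if j = i then |t| ^ q else 1) with hf
  have hprod : ∀ u : Fin d → ℝ,
      Real.exp (-∑ j, |u j|) * |u i| ^ q = ∏ j, f j (u j) := by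
    intro u
    simp_rw [hf]
    rw [Finset.prod_mul_distrib]
    rw [← Real.exp_sum]
    simp_rw [← Finset.sum_neg_distrib]
    congr 1
    rw [Finset.prod_ite_eq' Finset.univ i (fun j => |u j| ^ q)]
    simp
  have hfint : ∀ j, Integrable (f j) := by
    intro j
    by_cases hj : j = i
    · simpa [hf, hj] using integrable_exp_neg_abs_rpow hq
    · simpa [hf, hj] using integrable_exp_neg_abs
  have hint : Integrable (fun u : Fin d → ℝ => ∏ j, f j (u j)) :=
    Integrable.fintype_prod (𝕜 := ℝ) hfint
  have hnn : 0 ≤ᵐ[volume] fun u : Fin d → ℝ => ∏ j, f j (u j) := by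
    refine Filter.Eventually.of_forall (fun u => Finset.prod_nonneg (fun j _ => ?_))
    simp only [hf]
    positivity
  calc ∫⁻ u : Fin d → ℝ, ENNReal.ofReal (Real.exp (-∑ j, |u j|) * |u i| ^ q)
      = ∫⁻ u : Fin d → ℝ, ENNReal.ofReal (∏ j, f j (u j)) := by
        congr 1; funext u; rw [hprod]
    _ = ENNReal.ofReal (∫ u : Fin d → ℝ, ∏ j, f j (u j)) :=
        (MeasureTheory.ofReal_integral_eq_lintegral_ofReal hint hnn).symm
    _ = ENNReal.ofReal (2 ^ d * Real.Gamma (q + 1)) := by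
        erw [MeasureTheory.integral_fintype_prod_eq_prod (𝕜 := ℝ) f (μ := fun _ => (volume : Measure ℝ))]
        congr 1
        have hval : ∀ j, ∫ t : ℝ, f j t = 2 * (if j = i then Real.Gamma (q + 1) else 1) := by
          intro j
          by_cases hj : j = i
          · simp only [hf, hj, if_pos rfl]
            exact integral_exp_neg_abs_rpow hq
          · simp only [hf, if_neg hj, mul_one]
            exact integral_exp_neg_abs
        simp_rw [hval]
        rw [Finset.prod_mul_distrib, Finset.prod_const,
          Finset.prod_ite_eq' Finset.univ i (fun _ => Real.Gamma (q + 1))]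
        simp


lemma scale_lemma {d : ℕ} {q : ℝ} (hq0 : 0 ≤ q) (i : Fin d) :
    ∫⁻ u : Fin d → ℝ, ENNReal.ofReal (Real.exp (-∑ j, |u j|) * |u i| ^ q)
      = ENNReal.ofReal (Real.Gamma (d + q + 1)) *
        ∫⁻ u in {x : Fin d → ℝ | ∑ j, |x j| < 1}, ENNReal.ofReal (|u i| ^ q) := by
  set S : Set (Fin d → ℝ) := {x : Fin d → ℝ | ∑ j, |x j| < 1} with hS
  set H : (Fin d → ℝ) → ENNReal := fun u => ENNReal.ofReal (|u i| ^ q) with hHdef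
  have hn1 : Measurable (fun u : Fin d → ℝ => ∑ j, |u j|) := by
    exact Finset.measurable_sum _ (fun j _ => (measurable_pi_apply j).abs)
  have hn1nonneg : ∀ u : Fin d → ℝ, 0 ≤ ∑ j, |u j| :=
    fun u => Finset.sum_nonneg (fun j _ => abs_nonneg _)
  have hHm : Measurable H := by
    apply Measurable.ennreal_ofReal
    exact ((Real.continuous_rpow_const hq0).measurable).comp (measurable_pi_apply i).abs
  have hE : Measurable (fun r : ℝ => ENNReal.ofReal (Real.exp (-r))) :=
    (Real.measurable_exp.comp measurable_neg).ennreal_ofReal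
  set C : ENNReal := ∫⁻ u in S, H u with hC
  -- Step A : scaling of sub-level sets
  have stepA : ∀ r : ℝ, 0 < r →
      ∫⁻ u in {u : Fin d → ℝ | ∑ j, |u j| < r}, H u
        = ENNReal.ofReal (r ^ q * r ^ d) * C := by
    intro r hr
    set A : Set (Fin d → ℝ) := {u : Fin d → ℝ | ∑ j, |u j| < r} with hA
    have hAmeas : MeasurableSet A := measurableSet_lt hn1 measurable_const
    have hSmeas : MeasurableSet S := measurableSet_lt hn1 measurable_const
    have hpt : ∀ v : Fin d → ℝ, (A.indicator H) (r • v)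
        = Set.indicator S (fun v => ENNReal.ofReal (r ^ q) * H v) v := by
      intro v
      have hsum : ∑ j, |(r • v) j| = r * ∑ j, |v j| := by
        simp only [Pi.smul_apply, smul_eq_mul, abs_mul, abs_of_pos hr, Finset.mul_sum]
      have hmem : (r • v ∈ A) ↔ (v ∈ S) := by
        simp only [hA, hS, Set.mem_setOf_eq, hsum]
        constructor
        · intro h'; nlinarith
        · intro h'; nlinarith
      have hHv : H (r • v) = ENNReal.ofReal (r ^ q) * H v := by
        simp only [hHdef, Pi.smul_apply, smul_eq_mul, abs_mul, abs_of_pos hr]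
        rw [Real.mul_rpow (le_of_lt hr) (abs_nonneg _),
          ENNReal.ofReal_mul (Real.rpow_nonneg (le_of_lt hr) q)]
      by_cases hv : v ∈ S
      · rw [Set.indicator_of_mem hv, Set.indicator_of_mem (hmem.2 hv), hHv]
      · rw [Set.indicator_of_notMem hv, Set.indicator_of_notMem (fun hc => hv (hmem.1 hc))]
    have hmap := Measure.map_addHaar_smul (volume : Measure (Fin d → ℝ)) (ne_of_gt hr)
    have key : ∫⁻ v, (A.indicator H) (r • v) ∂volume
        = ENNReal.ofReal |((r:ℝ) ^ Module.finrank ℝ (Fin d → ℝ))⁻¹| * ∫⁻ u, A.indicator H u ∂volume := by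
      rw [← lintegral_map (hHm.indicator hAmeas) (measurable_const_smul r)]
      rw [show (fun v : Fin d → ℝ => r • v) = (r • ·) from rfl, hmap]
      rw [lintegral_smul_measure, smul_eq_mul]
    have key2 : ∫⁻ v, (A.indicator H) (r • v) ∂volume = ENNReal.ofReal (r ^ q) * C := by
      calc ∫⁻ v, (A.indicator H) (r • v) ∂volume
          = ∫⁻ v, Set.indicator S (fun v => ENNReal.ofReal (r ^ q) * H v) v ∂volume := by
            exact lintegral_congr hpt
        _ = ∫⁻ v in S, ENNReal.ofReal (r ^ q) * H v ∂volume := lintegral_indicator hSmeas _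
        _ = ENNReal.ofReal (r ^ q) * C := lintegral_const_mul _ hHm
    have hfr : Module.finrank ℝ (Fin d → ℝ) = d := by
      rw [Module.finrank_fintype_fun_eq_card, Fintype.card_fin]
    rw [hfr] at key
    have hcc : ENNReal.ofReal (r ^ d) * ENNReal.ofReal |((r:ℝ) ^ d)⁻¹| = 1 := by
      rw [abs_of_pos (by positivity), ← ENNReal.ofReal_mul (by positivity),
        mul_inv_cancel₀ (by positivity), ENNReal.ofReal_one]
    calc ∫⁻ u in A, H u = ∫⁻ u, A.indicator H u ∂volume := (lintegral_indicator hAmeas H).symm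
      _ = 1 * ∫⁻ u, A.indicator H u ∂volume := (one_mul _).symm
      _ = ENNReal.ofReal (r ^ d) *
            (ENNReal.ofReal |((r:ℝ) ^ d)⁻¹| * ∫⁻ u, A.indicator H u ∂volume) := by
          rw [← mul_assoc, hcc]
      _ = ENNReal.ofReal (r ^ d) * (ENNReal.ofReal (r ^ q) * C) := by rw [← key, key2]
      _ = ENNReal.ofReal (r ^ q * r ^ d) * C := by
          rw [← mul_assoc, ← ENNReal.ofReal_mul (by positivity), mul_comm ((r:ℝ) ^ d) _]
  -- the Gamma integral
  have hGa : ∫⁻ r in Ioi (0:ℝ), ENNReal.ofReal (Real.exp (-r)) * ENNReal.ofReal (r ^ q * r ^ d)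
      = ENNReal.ofReal (Real.Gamma (d + q + 1)) := by
    have h1 : ∀ r : ℝ, r ∈ Ioi (0:ℝ) →
        Real.exp (-r) * (r ^ q * r ^ d) = Real.exp (-r) * r ^ ((d:ℝ) + q + 1 - 1) := by
      intro r hr
      rw [mem_Ioi] at hr
      rw [add_sub_cancel_right, ← Real.rpow_natCast r d, ← Real.rpow_add hr, add_comm q (d:ℝ)]
    have hig : IntegrableOn (fun r : ℝ => Real.exp (-r) * (r ^ q * r ^ d)) (Ioi (0:ℝ)) := by
      refine (Real.GammaIntegral_convergent (s := (d:ℝ) + q + 1) (by positivity)).congr_fun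
        (fun r hr => (h1 r hr).symm) measurableSet_Ioi
    have hnn : 0 ≤ᵐ[volume.restrict (Ioi (0:ℝ))] fun r : ℝ => Real.exp (-r) * (r ^ q * r ^ d) := by
      refine (ae_restrict_iff' measurableSet_Ioi).2 (Filter.Eventually.of_forall (fun r hr => ?_))
      rw [mem_Ioi] at hr
      positivity
    calc ∫⁻ r in Ioi (0:ℝ), ENNReal.ofReal (Real.exp (-r)) * ENNReal.ofReal (r ^ q * r ^ d)
        = ∫⁻ r in Ioi (0:ℝ), ENNReal.ofReal (Real.exp (-r) * (r ^ q * r ^ d)) := by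
          refine lintegral_congr (fun r => ?_)
          rw [ENNReal.ofReal_mul (le_of_lt (Real.exp_pos _))]
      _ = ENNReal.ofReal (∫ r in Ioi (0:ℝ), Real.exp (-r) * (r ^ q * r ^ d)) :=
          (MeasureTheory.ofReal_integral_eq_lintegral_ofReal hig hnn).symm
      _ = ENNReal.ofReal (Real.Gamma (d + q + 1)) := by
          congr 1
          rw [Real.Gamma_eq_integral (by positivity : (0:ℝ) < (d:ℝ) + q + 1)]
          exact setIntegral_congr_fun measurableSet_Ioi h1
  -- layer-cake / master computation
  set T : Set ((Fin d → ℝ) × ℝ) := {z | ∑ j, |z.1 j| < z.2} with hT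
  have hTmeas : MeasurableSet T := measurableSet_lt (hn1.comp measurable_fst) measurable_snd
  set G : ((Fin d → ℝ) × ℝ) → ENNReal :=
    T.indicator (fun z => ENNReal.ofReal (Real.exp (-z.2)) * H z.1) with hG
  have hGmeas : Measurable G := by
    refine Measurable.indicator ?_ hTmeas
    exact ((Real.measurable_exp.comp measurable_snd.neg).ennreal_ofReal).mul (hHm.comp measurable_fst)
  calc ∫⁻ u : Fin d → ℝ, ENNReal.ofReal (Real.exp (-∑ j, |u j|) * |u i| ^ q)
      = ∫⁻ u : Fin d → ℝ, (∫⁻ r in Ioi (∑ j, |u j|), ENNReal.ofReal (Real.exp (-r))) * H u := by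
        refine lintegral_congr (fun u => ?_)
        rw [ENNReal.ofReal_mul (le_of_lt (Real.exp_pos _))]
        congr 1
        have hint : IntegrableOn (fun r : ℝ => Real.exp (-r)) (Ioi (∑ j, |u j|)) := by
          simpa using exp_neg_integrableOn_Ioi (∑ j, |u j|) one_pos
        rw [← MeasureTheory.ofReal_integral_eq_lintegral_ofReal hint
          (Filter.Eventually.of_forall (fun r => le_of_lt (Real.exp_pos _))),
          integral_exp_neg_Ioi]
    _ = ∫⁻ u : Fin d → ℝ, ∫⁻ r, G (u, r) := by
        refine lintegral_congr (fun u => ?_)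
        rw [← lintegral_mul_const _ hE]
        rw [← lintegral_indicator measurableSet_Ioi]
        refine lintegral_congr (fun r => ?_)
        simp only [hG, Set.indicator_apply, Set.mem_Ioi, hT, Set.mem_setOf_eq]
    _ = ∫⁻ r, ∫⁻ u : Fin d → ℝ, G (u, r) := by
        exact lintegral_lintegral_swap hGmeas.aemeasurable
    _ = ∫⁻ r, (Ioi (0:ℝ)).indicator
          (fun r => ENNReal.ofReal (Real.exp (-r)) * (ENNReal.ofReal (r ^ q * r ^ d) * C)) r := by
        refine lintegral_congr (fun r => ?_)
        have hinner : ∫⁻ u : Fin d → ℝ, G (u, r)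
            = ENNReal.ofReal (Real.exp (-r)) * ∫⁻ u in {u : Fin d → ℝ | ∑ j, |u j| < r}, H u := by
          have : ∀ u : Fin d → ℝ, G (u, r) = Set.indicator {u : Fin d → ℝ | ∑ j, |u j| < r}
              (fun u => ENNReal.ofReal (Real.exp (-r)) * H u) u := by
            intro u
            simp only [hG, Set.indicator_apply, hT, Set.mem_setOf_eq]
          rw [lintegral_congr this, lintegral_indicator (measurableSet_lt hn1 measurable_const),
            lintegral_const_mul _ hHm]
        by_cases hr : 0 < r
        · rw [hinner, stepA r hr]
          exact (Set.indicator_of_mem (Set.mem_Ioi.mpr hr) (fun r : ℝ => ENNReal.ofReal (Real.exp (-r)) * (ENNReal.ofReal (r ^ q * r ^ d) * C))).symm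
        · have hempty : {u : Fin d → ℝ | ∑ j, |u j| < r} = (∅ : Set (Fin d → ℝ)) := by
            ext u
            simp only [Set.mem_setOf_eq, Set.mem_empty_iff_false, iff_false, not_lt]
            push_neg at hr
            exact le_trans hr (hn1nonneg u)
          rw [hinner, hempty, Measure.restrict_empty, lintegral_zero_measure, mul_zero]
          exact (Set.indicator_of_notMem (by simpa using hr) (fun r : ℝ => ENNReal.ofReal (Real.exp (-r)) * (ENNReal.ofReal (r ^ q * r ^ d) * C))).symm
    _ = ∫⁻ r in Ioi (0:ℝ),
          ENNReal.ofReal (Real.exp (-r)) * (ENNReal.ofReal (r ^ q * r ^ d) * C) := by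
        rw [lintegral_indicator measurableSet_Ioi]
    _ = (∫⁻ r in Ioi (0:ℝ), ENNReal.ofReal (Real.exp (-r)) * ENNReal.ofReal (r ^ q * r ^ d)) * C := by
        simp_rw [← mul_assoc]
        rw [lintegral_mul_const _ (f := fun r : ℝ => ENNReal.ofReal (Real.exp (-r)) * ENNReal.ofReal (r ^ q * r ^ d)) (hE.mul (by
          exact ((Real.continuous_rpow_const hq0).mul (continuous_pow d)).measurable.ennreal_ofReal))]
    _ = ENNReal.ofReal (Real.Gamma (d + q + 1)) * C := by rw [hGa]


lemma moment_lintegral {d : ℕ} {q : ℝ} (hq : 0 ≤ q) (i : Fin d) :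
    ∫⁻ u in {x : Fin d → ℝ | ∑ j, |x j| < 1}, ENNReal.ofReal (|u i| ^ q)
      = ENNReal.ofReal (2 ^ d * Real.Gamma (q + 1) / Real.Gamma (d + q + 1)) := by
  have hGpos : 0 < Real.Gamma ((d:ℝ) + q + 1) := Real.Gamma_pos_of_pos (by positivity)
  have key := (scale_lemma hq i).symm.trans (lintegral_exp_prod hq i)
  rw [← ENNReal.mul_right_inj (a := ENNReal.ofReal (Real.Gamma (d + q + 1)))
    (ENNReal.ofReal_pos.mpr hGpos).ne' ENNReal.ofReal_ne_top]
  rw [key, ← ENNReal.ofReal_mul (le_of_lt hGpos)]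
  congr 1
  field_simp

lemma moment_integral {d : ℕ} {q : ℝ} (hq : 0 ≤ q) (i : Fin d) :
    (∫ u in {x : Fin d → ℝ | ∑ j, |x j| < 1}, |u i| ^ q ∂(volume : Measure (Fin d → ℝ)))
      = 2 ^ d * Real.Gamma (q + 1) / Real.Gamma (d + q + 1) := by
  have hmeas : AEStronglyMeasurable (fun u : Fin d → ℝ => |u i| ^ q)
      (volume.restrict {x : Fin d → ℝ | ∑ j, |x j| < 1}) := by
    exact (((Real.continuous_rpow_const hq).comp (continuous_abs.comp (continuous_apply i)))).aestronglyMeasurable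
  have hnn : 0 ≤ᵐ[volume.restrict {x : Fin d → ℝ | ∑ j, |x j| < 1}]
      (fun u : Fin d → ℝ => |u i| ^ q) :=
    Filter.Eventually.of_forall (fun u => Real.rpow_nonneg (abs_nonneg _) q)
  rw [MeasureTheory.integral_eq_lintegral_of_nonneg_ae hnn hmeas, moment_lintegral hq i,
    ENNReal.toReal_ofReal]
  have hGpos : 0 < Real.Gamma ((d:ℝ) + q + 1) := Real.Gamma_pos_of_pos (by positivity)
  have hG2 : 0 < Real.Gamma (q + 1) := Real.Gamma_pos_of_pos (by positivity)
  positivity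

lemma moment_integrableOn {d : ℕ} {q : ℝ} (hq : 0 ≤ q) (i : Fin d) :
    IntegrableOn (fun u : Fin d → ℝ => |u i| ^ q) {x : Fin d → ℝ | ∑ j, |x j| < 1} volume := by
  constructor
  · exact (((Real.continuous_rpow_const hq).comp (continuous_abs.comp (continuous_apply i)))).aestronglyMeasurable
  · rw [MeasureTheory.hasFiniteIntegral_iff_ofReal
      (Filter.Eventually.of_forall (fun u => Real.rpow_nonneg (abs_nonneg _) q))]
    rw [moment_lintegral hq i]
    exact ENNReal.ofReal_lt_top


lemma volume_S (d : ℕ) :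
    volume {x : Fin d → ℝ | ∑ i, |x i| < 1} = ENNReal.ofReal (2 ^ d / Real.Gamma (d + 1)) := by
  have := MeasureTheory.volume_sum_rpow_lt_one (Fin d) (le_refl (1:ℝ))
  simp only [Real.rpow_one, Fintype.card_fin] at this
  rw [this]
  norm_num [Real.Gamma_two]

lemma vol_S_pos (d : ℕ) : 0 < 2 ^ d / Real.Gamma (d + 1) := by
  have := Real.Gamma_pos_of_pos (show (0:ℝ) < (d:ℝ) + 1 by positivity)
  positivity

lemma vol_S_ne_zero (d : ℕ) : volume {x : Fin d → ℝ | ∑ i, |x i| < 1} ≠ 0 := by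
  rw [volume_S d]
  simp [ENNReal.ofReal_pos.mpr (vol_S_pos d), (ENNReal.ofReal_pos.mpr (vol_S_pos d)).ne']

lemma vol_S_ne_top (d : ℕ) : volume {x : Fin d → ℝ | ∑ i, |x i| < 1} ≠ ⊤ := by
  rw [volume_S d]; exact ENNReal.ofReal_ne_top

instance uniformBall_isProb (d : ℕ) : IsProbabilityMeasure (uniformBall d) :=
  ProbabilityTheory.cond_isProbabilityMeasure_of_finite (vol_S_ne_zero d) (vol_S_ne_top d)

lemma integrable_G {d : ℕ} {q : ℝ} (hq : 0 ≤ q) :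
    Integrable (fun u : Fin d → ℝ => ∑ i, |u i| ^ q) (uniformBall d) := by
  rw [uniformBall, ProbabilityTheory.cond]
  rw [integrable_smul_measure (by simp [vol_S_ne_top d]) (by simp [vol_S_ne_zero d])]
  exact integrable_finset_sum _ (fun i _ => moment_integrableOn hq i)

lemma EG {d : ℕ} {q : ℝ} (hq : 0 ≤ q) :
    ∫ u, (∑ i, |u i| ^ q) ∂(uniformBall d)
      = d * Real.Gamma (d + 1) * Real.Gamma (q + 1) / Real.Gamma (d + q + 1) := by
  rw [uniformBall, ProbabilityTheory.cond, integral_smul_measure]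
  rw [integral_finset_sum _ (fun i _ => moment_integrableOn hq i)]
  simp_rw [moment_integral hq]
  rw [Finset.sum_const, Finset.card_univ, Fintype.card_fin]
  rw [volume_S d, ← ENNReal.ofReal_inv_of_pos (vol_S_pos d), ENNReal.toReal_ofReal (le_of_lt (inv_pos.mpr (vol_S_pos d)))]
  have h1 : 0 < Real.Gamma ((d:ℝ) + 1) := Real.Gamma_pos_of_pos (by positivity)
  have h2 : 0 < Real.Gamma ((d:ℝ) + q + 1) := Real.Gamma_pos_of_pos (by positivity)
  have h3 : (0:ℝ) < 2 ^ d := by positivity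
  simp only [smul_eq_mul, nsmul_eq_mul]
  field_simp

/-- If `f` is `L`-Lipschitz w.r.t. the ℓ_q norm, `h > 0`, `U` uniform on the ℓ¹-ball and
`f_h(x) = E[f(x + hU)]`, then `|f_h(x) - f(x)| ≤ L h E[‖U‖_q] ≤ L h q d^{1/q}/(d+1)`. -/
theorem smoothing_approximation (d : ℕ) (hd : 0 < d) (q : ℝ) (hq : 1 ≤ q)
    (f : (Fin d → ℝ) → ℝ) (L : ℝ) (hL : 0 ≤ L)
    (hf : ∀ x y, |f x - f y| ≤ L * (∑ i, |x i - y i| ^ q) ^ (1 / q))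
    (h : ℝ) (hh : 0 < h) (x : Fin d → ℝ) :
    |(∫ u, f (x + h • u) ∂uniformBall d) - f x| ≤
        L * h * ∫ u, (∑ i, |u i| ^ q) ^ (1 / q) ∂uniformBall d ∧
      |(∫ u, f (x + h • u) ∂uniformBall d) - f x| ≤
        L * h * q * (d : ℝ) ^ (1 / q) / ((d : ℝ) + 1) := by
  have hq0 : 0 < q := lt_of_lt_of_le one_pos hq
  set μ := uniformBall d with hμ
  set G : (Fin d → ℝ) → ℝ := fun u => ∑ i, |u i| ^ q with hG
  set g : (Fin d → ℝ) → ℝ := fun u => (∑ i, |u i| ^ q) ^ (1 / q) with hg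
  have hGnn : ∀ u, 0 ≤ G u := fun u => Finset.sum_nonneg fun i _ => Real.rpow_nonneg (abs_nonneg _) q
  have hgnn : ∀ u, 0 ≤ g u := fun u => Real.rpow_nonneg (hGnn u) _
  have hGcont : Continuous G :=
    continuous_finset_sum _ (fun i _ => (Real.continuous_rpow_const (le_of_lt hq0)).comp
      (continuous_abs.comp (continuous_apply i)))
  have hgcont : Continuous g := (Real.continuous_rpow_const (by positivity)).comp hGcont
  -- Lipschitz pointwise bound
  have hlip : ∀ u, |f (x + h • u) - f x| ≤ L * h * g u := by
    intro u
    refine le_trans (hf (x + h • u) x) (le_of_eq ?_)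
    have harg : ∀ i : Fin d, |(x + h • u) i - x i| ^ q = h ^ q * |u i| ^ q := by
      intro i
      have : (x + h • u) i - x i = h * u i := by
        simp only [Pi.add_apply, Pi.smul_apply, smul_eq_mul]; ring
      rw [this, abs_mul, abs_of_pos hh, Real.mul_rpow (le_of_lt hh) (abs_nonneg _)]
    simp_rw [harg, ← Finset.mul_sum]
    rw [Real.mul_rpow (by positivity) (hGnn u)]
    have : (h ^ q) ^ (1/q : ℝ) = h := by
      rw [← Real.rpow_mul (le_of_lt hh), mul_one_div_cancel (ne_of_gt hq0), Real.rpow_one]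
    rw [this]
    ring
  -- continuity of f
  have hfc : Continuous f := by
    rw [continuous_iff_continuousAt]
    intro b
    have hzero : Tendsto (fun a => |f a - f b|) (nhds b) (nhds 0) := by
      have hcont : Tendsto (fun a : Fin d → ℝ => L * (∑ i, |a i - b i| ^ q) ^ (1/q : ℝ))
          (nhds b) (nhds (L * (∑ i : Fin d, |b i - b i| ^ q) ^ (1/q : ℝ))) := by
        refine Continuous.tendsto ?_ b
        exact continuous_const.mul ((Real.continuous_rpow_const (by positivity)).comp
          (continuous_finset_sum _ (fun i _ => (Real.continuous_rpow_const (le_of_lt hq0)).comp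
            (continuous_abs.comp ((continuous_apply i).sub continuous_const)))))
      have hval : L * (∑ i : Fin d, |b i - b i| ^ q) ^ (1/q : ℝ) = 0 := by
        have hzz : ∑ i : Fin d, |b i - b i| ^ q = 0 := by
          simp [Real.zero_rpow (ne_of_gt hq0)]
        rw [hzz, Real.zero_rpow (ne_of_gt (by positivity : (0:ℝ) < 1/q)), mul_zero]
      rw [hval] at hcont
      exact squeeze_zero (fun a => abs_nonneg _) (fun a => hf a b) hcont
    have h2 : Tendsto (fun a => f a - f b) (nhds b) (nhds 0) := by
      exact (tendsto_zero_iff_abs_tendsto_zero _).mpr hzero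
    have h3 := h2.add_const (f b)
    exact (by simpa using h3 : Tendsto (fun x => f x) (nhds b) (nhds (f b)))
  -- integrability
  haveI : IsProbabilityMeasure μ := uniformBall_isProb d
  have hGint : Integrable G μ := integrable_G (le_of_lt hq0)
  have hgint : Integrable g μ := by
    refine Integrable.mono ((integrable_const 1).add hGint) hgcont.aestronglyMeasurable ?_
    refine Filter.Eventually.of_forall (fun u => ?_)
    simp only [Pi.add_apply, Real.norm_eq_abs]
    rw [abs_of_nonneg (hgnn u), abs_of_nonneg (by linarith [hGnn u] : (0:ℝ) ≤ 1 + G u)]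
    by_cases hle : G u ≤ 1
    · have : g u ≤ 1 := Real.rpow_le_one (hGnn u) hle (by positivity)
      linarith [hGnn u]
    · push_neg at hle
      have h1q : (1/q : ℝ) ≤ 1 := by
        rw [div_le_one hq0]; exact hq
      have : g u ≤ G u ^ (1:ℝ) := Real.rpow_le_rpow_of_exponent_le (le_of_lt hle) h1q
      rw [Real.rpow_one] at this
      linarith
  have hfint : Integrable (fun u => f (x + h • u)) μ := by
    refine Integrable.mono ((integrable_const |f x|).add (hgint.const_mul (L * h)))
      ((hfc.comp (continuous_const.add (continuous_const_smul h))).aestronglyMeasurable) ?_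
    refine Filter.Eventually.of_forall (fun u => ?_)
    simp only [Pi.add_apply, Real.norm_eq_abs]
    rw [abs_of_nonneg (by positivity : (0:ℝ) ≤ |f x| + L * h * g u)]
    have habs : |f (x + h • u)| ≤ |f x| + L * h * g u := by
      calc |f (x + h • u)| = |f x + (f (x + h • u) - f x)| := by ring_nf
        _ ≤ |f x| + |f (x + h • u) - f x| := abs_add_le _ _
        _ ≤ |f x| + L * h * g u := by linarith [hlip u]
    exact habs
  -- Part A
  have hconst : ∫ (_ : Fin d → ℝ), f x ∂μ = f x := by simp
  have hA : |(∫ u, f (x + h • u) ∂μ) - f x| ≤ L * h * ∫ u, g u ∂μ := by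
    calc |(∫ u, f (x + h • u) ∂μ) - f x|
        = |∫ u, (f (x + h • u) - f x) ∂μ| := by
          rw [integral_sub hfint (integrable_const _), hconst]
      _ ≤ ∫ u, |f (x + h • u) - f x| ∂μ := by
          simpa [Real.norm_eq_abs] using
            norm_integral_le_integral_norm (fun u : Fin d → ℝ => f (x + h • u) - f x) (μ := μ)
      _ ≤ ∫ u, L * h * g u ∂μ := by
          refine integral_mono (hfint.sub (integrable_const _)).abs (hgint.const_mul _) ?_
          intro u
          exact hlip u
      _ = L * h * ∫ u, g u ∂μ := integral_const_mul _ _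
  refine ⟨hA, ?_⟩
  -- Jensen
  have hjensen : ∫ u, g u ∂μ ≤ (∫ u, G u ∂μ) ^ (1/q : ℝ) := by
    have hcon : ConcaveOn ℝ (Ici 0) (fun t : ℝ => t ^ (1/q : ℝ)) :=
      Real.concaveOn_rpow (by positivity) (by rw [div_le_one hq0]; exact hq)
    have := hcon.le_map_integral (μ := μ) (f := G)
      ((Real.continuous_rpow_const (by positivity)).continuousOn) isClosed_Ici
      (Filter.Eventually.of_forall hGnn) hGint (by exact hgint)
    exact this
  -- Gamma bound
  have h1 : 0 < Real.Gamma ((d:ℝ) + 1) := Real.Gamma_pos_of_pos (by positivity)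
  have h2 : 0 < Real.Gamma ((d:ℝ) + q + 1) := Real.Gamma_pos_of_pos (by positivity)
  have h3 : 0 < Real.Gamma (q + 1) := Real.Gamma_pos_of_pos (by positivity)
  have hg1 : Real.Gamma (q + 1) ≤ q ^ q := by
    rw [add_comm]; exact gamma_slope_aux hq
  have hg2 : ((d:ℝ) + 1) ^ q * Real.Gamma ((d:ℝ) + 1) ≤ Real.Gamma ((d:ℝ) + q + 1) := by
    have := gamma_slope_aux2 hq ((d:ℝ) + 1) (by simp)
    calc ((d:ℝ) + 1) ^ q * Real.Gamma ((d:ℝ) + 1) ≤ Real.Gamma ((d:ℝ) + 1 + q) := this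
      _ = Real.Gamma ((d:ℝ) + q + 1) := by ring_nf
  have hMle : (d:ℝ) * Real.Gamma (d + 1) * Real.Gamma (q + 1) / Real.Gamma (d + q + 1)
      ≤ (d:ℝ) * q ^ q / ((d:ℝ) + 1) ^ q := by
    have hd1q : (0:ℝ) < ((d:ℝ) + 1) ^ q := by positivity
    have hqq : (0:ℝ) < q ^ q := Real.rpow_pos_of_pos hq0 q
    have key : Real.Gamma (d + 1) * Real.Gamma (q + 1) / Real.Gamma (d + q + 1)
        ≤ q ^ q / ((d:ℝ) + 1) ^ q := by
      have hnum : Real.Gamma ((d:ℝ) + 1) * Real.Gamma (q + 1) ≤ Real.Gamma ((d:ℝ) + 1) * q ^ q :=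
        mul_le_mul_of_nonneg_left hg1 h1.le
      calc Real.Gamma (d + 1) * Real.Gamma (q + 1) / Real.Gamma (d + q + 1)
          ≤ Real.Gamma ((d:ℝ) + 1) * q ^ q / (((d:ℝ) + 1) ^ q * Real.Gamma ((d:ℝ) + 1)) :=
            div_le_div₀ (by positivity) hnum (by positivity) hg2
        _ = q ^ q / ((d:ℝ) + 1) ^ q := by field_simp
    calc (d:ℝ) * Real.Gamma (d + 1) * Real.Gamma (q + 1) / Real.Gamma (d + q + 1)
        = (d:ℝ) * (Real.Gamma (d + 1) * Real.Gamma (q + 1) / Real.Gamma (d + q + 1)) := by ring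
      _ ≤ (d:ℝ) * (q ^ q / ((d:ℝ) + 1) ^ q) := by
          exact mul_le_mul_of_nonneg_left key (Nat.cast_nonneg d)
      _ = (d:ℝ) * q ^ q / ((d:ℝ) + 1) ^ q := by ring
  have hfinal : (∫ u, G u ∂μ) ^ (1/q : ℝ) ≤ q * (d:ℝ) ^ (1/q : ℝ) / ((d:ℝ) + 1) := by
    rw [EG (le_of_lt hq0)]
    calc ((d:ℝ) * Real.Gamma (d + 1) * Real.Gamma (q + 1) / Real.Gamma (d + q + 1)) ^ (1/q : ℝ)
        ≤ ((d:ℝ) * q ^ q / ((d:ℝ) + 1) ^ q) ^ (1/q : ℝ) := by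
          refine Real.rpow_le_rpow (by positivity) hMle (by positivity)
      _ = q * (d:ℝ) ^ (1/q : ℝ) / ((d:ℝ) + 1) := by
          rw [Real.div_rpow (by positivity) (by positivity),
            Real.mul_rpow (Nat.cast_nonneg d) (by positivity)]
          have e1 : ((q : ℝ) ^ q) ^ (1/q : ℝ) = q := by
            rw [← Real.rpow_mul hq0.le, mul_one_div_cancel (ne_of_gt hq0), Real.rpow_one]
          have e2 : (((d:ℝ) + 1) ^ q) ^ (1/q : ℝ) = (d:ℝ) + 1 := by
            rw [← Real.rpow_mul (by positivity), mul_one_div_cancel (ne_of_gt hq0), Real.rpow_one]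
          rw [e1, e2]
          ring
  calc |(∫ u, f (x + h • u) ∂μ) - f x| ≤ L * h * ∫ u, g u ∂μ := hA
    _ ≤ L * h * (q * (d:ℝ) ^ (1/q : ℝ) / ((d:ℝ) + 1)) := by
        refine mul_le_mul_of_nonneg_left (le_trans hjensen hfinal) (by positivity)
    _ = L * h * q * (d:ℝ) ^ (1/q : ℝ) / ((d:ℝ) + 1) := by ring
end

section
/- (Schechtman–Zinn) Let W_1, ..., W_d be i.i.d. mean-0 scale-1 Laplace random variables and W = (W_1,...,W_d). Then W/||W||_1 is uniformly distributed on the ℓ1-sphere S_1^d, and W/||W||_1 is independent of ||W||_1. -/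
open MeasureTheory ProbabilityTheory

noncomputable def laplaceMeasure : Measure ℝ :=
  volume.withDensity (fun w => ENNReal.ofReal ((1 / 2) * Real.exp (-|w|)))

/-- The uniform distribution on the ℓ¹-sphere `S₁ᵈ`: the normalized cone measure, i.e. the
pushforward of the uniform distribution on the ℓ¹-ball under the radial projection
`x ↦ x/‖x‖₁`. -/
noncomputable def sphereConeMeasure (d : ℕ) : Measure (Fin d → ℝ) :=
  Measure.map (fun x => (∑ i, |x i|)⁻¹ • x)
    (ProbabilityTheory.cond volume {x : Fin d → ℝ | ∑ i, |x i| ≤ 1})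

namespace SchechtmanZinnAux

open Set Pointwise
open scoped ENNReal

variable {d : ℕ}

/-- The ℓ¹ norm. -/
def Nf (d : ℕ) (x : Fin d → ℝ) : ℝ := ∑ i, |x i|

/-- The radial projection to the ℓ¹ sphere. -/
noncomputable def Tf (d : ℕ) (x : Fin d → ℝ) : Fin d → ℝ := (Nf d x)⁻¹ • x

lemma Nf_nonneg (x : Fin d → ℝ) : 0 ≤ Nf d x :=
  Finset.sum_nonneg fun _ _ => abs_nonneg _

lemma continuous_Nf : Continuous (Nf d) :=
  continuous_finset_sum _ fun i _ => (continuous_apply i).abs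

lemma measurable_Nf : Measurable (Nf d) := continuous_Nf.measurable

lemma measurable_Tf : Measurable (Tf d) :=
  (measurable_Nf.inv).smul measurable_id

lemma Nf_smul {c : ℝ} (hc : 0 ≤ c) (x : Fin d → ℝ) : Nf d (c • x) = c * Nf d x := by
  simp only [Nf, Pi.smul_apply, smul_eq_mul, abs_mul, abs_of_nonneg hc, Finset.mul_sum]

lemma Tf_smul {c : ℝ} (hc : 0 < c) (x : Fin d → ℝ) : Tf d (c • x) = Tf d x := by
  unfold Tf
  rw [Nf_smul hc.le, smul_smul]
  congr 1
  rw [mul_inv]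
  calc c⁻¹ * (Nf d x)⁻¹ * c = (Nf d x)⁻¹ * (c⁻¹ * c) := by ring
  _ = (Nf d x)⁻¹ := by rw [inv_mul_cancel₀ hc.ne', mul_one]

lemma vol_Iic_lt_top (t : ℝ) : volume (Nf d ⁻¹' Iic t) < ∞ := by
  have hsub : Nf d ⁻¹' Iic t ⊆ Metric.closedBall 0 (max t 0) := by
    intro x hx
    rw [Metric.mem_closedBall, dist_zero_right]
    refine pi_norm_le_iff_of_nonneg (le_max_right _ _) |>.2 fun i => ?_
    have h1 : |x i| ≤ Nf d x :=
      Finset.single_le_sum (fun j _ => abs_nonneg (x j)) (Finset.mem_univ i)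
    exact (h1.trans hx).trans (le_max_left _ _)
  exact (measure_mono hsub).trans_lt (measure_closedBall_lt_top)

lemma vol_ball_pos : 0 < volume (Nf d ⁻¹' Iic 1) := by
  have hsub : Nf d ⁻¹' Iio 1 ⊆ Nf d ⁻¹' Iic 1 := preimage_mono Iio_subset_Iic_self
  have hopen : IsOpen (Nf d ⁻¹' Iio 1) := isOpen_Iio.preimage continuous_Nf
  have h0 : (0 : Fin d → ℝ) ∈ Nf d ⁻¹' Iio 1 := by
    simp [Nf, mem_preimage]
  exact lt_of_lt_of_le (hopen.measure_pos volume ⟨0, h0⟩) (measure_mono hsub)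

lemma vol_singleton_zero (hd : 0 < d) : volume ({(0 : Fin d → ℝ)} : Set (Fin d → ℝ)) = 0 := by
  haveI : Nonempty (Fin d) := Fin.pos_iff_nonempty.mp hd
  exact measure_singleton _

lemma smul_inter {E : Set (Fin d → ℝ)}
    (hhom : ∀ c : ℝ, 0 < c → ∀ x, x ∈ E ↔ c • x ∈ E) {t : ℝ} (ht : 0 < t) :
    E ∩ Nf d ⁻¹' Iic t = t • (E ∩ Nf d ⁻¹' Iic 1) := by
  ext x
  rw [mem_smul_set_iff_inv_smul_mem₀ ht.ne']
  simp only [mem_inter_iff, mem_preimage, mem_Iic]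
  rw [Nf_smul (inv_nonneg.2 ht.le), inv_mul_eq_div, div_le_one ht,
    ← hhom t⁻¹ (inv_pos.2 ht) x]

lemma vol_inter_scaled {E : Set (Fin d → ℝ)}
    (hhom : ∀ c : ℝ, 0 < c → ∀ x, x ∈ E ↔ c • x ∈ E) {t : ℝ} (ht : 0 < t) :
    volume (E ∩ Nf d ⁻¹' Iic t)
      = ENNReal.ofReal (t ^ d) * volume (E ∩ Nf d ⁻¹' Iic 1) := by
  rw [smul_inter hhom ht, Measure.addHaar_smul]
  congr 2
  rw [abs_of_nonneg (by positivity), Module.finrank_fintype_fun_eq_card, Fintype.card_fin]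

lemma map_restrict_eq (hd : 0 < d) {E : Set (Fin d → ℝ)} (hE : MeasurableSet E)
    (hhom : ∀ c : ℝ, 0 < c → ∀ x, x ∈ E ↔ c • x ∈ E) :
    Measure.map (Nf d) (volume.restrict E)
      = (volume (E ∩ Nf d ⁻¹' Iic 1) / volume (Nf d ⁻¹' Iic 1))
          • Measure.map (Nf d) volume := by
  refine Measure.ext_of_generateFrom_of_iUnion (Set.range Iic) (fun n => Iic (n : ℝ))
    (borel_eq_generateFrom_Iic ℝ) isPiSystem_Iic ?_ (fun n => ⟨_, rfl⟩) ?_ ?_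
  · ext x
    simp only [mem_iUnion, mem_Iic, mem_univ, iff_true]
    exact exists_nat_ge x
  · intro n
    rw [Measure.map_apply measurable_Nf measurableSet_Iic,
      Measure.restrict_apply (measurable_Nf measurableSet_Iic)]
    exact ((measure_mono inter_subset_left).trans_lt (vol_Iic_lt_top _)).ne
  · rintro s ⟨t, rfl⟩
    rw [Measure.map_apply measurable_Nf measurableSet_Iic,
      Measure.restrict_apply (measurable_Nf measurableSet_Iic), Measure.smul_apply,
      Measure.map_apply measurable_Nf measurableSet_Iic, smul_eq_mul]
    rcases le_or_gt t 0 with h | h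
    · have hz : volume (Nf d ⁻¹' Iic t) = 0 := by
        refine measure_mono_null ?_ (vol_singleton_zero hd)
        intro x hx
        have h0 : Nf d x = 0 := le_antisymm (le_trans hx h) (Nf_nonneg x)
        have hall := (Finset.sum_eq_zero_iff_of_nonneg
          (fun i _ => abs_nonneg (x i))).mp h0
        have : x = 0 := funext fun i => abs_eq_zero.mp (hall i (Finset.mem_univ i))
        simp [this]
      rw [hz, mul_zero]
      exact measure_mono_null inter_subset_left hz
    · have h1 := vol_inter_scaled hhom h
      have h2 := vol_inter_scaled (E := (univ : Set (Fin d → ℝ)))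
        (fun c hc x => by simp) h
      rw [univ_inter, univ_inter] at h2
      rw [inter_comm, h1, h2,
        mul_comm (volume (E ∩ Nf d ⁻¹' Iic 1) / volume (Nf d ⁻¹' Iic 1)), mul_assoc]
      congr 1
      rw [mul_comm, ENNReal.div_mul_cancel vol_ball_pos.ne' (vol_Iic_lt_top 1).ne]

lemma setLintegral_eq (hd : 0 < d) {E : Set (Fin d → ℝ)} (hE : MeasurableSet E)
    (hhom : ∀ c : ℝ, 0 < c → ∀ x, x ∈ E ↔ c • x ∈ E) {φ : ℝ → ℝ≥0∞} (hφ : Measurable φ) :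
    ∫⁻ x in E, φ (Nf d x)
      = (volume (E ∩ Nf d ⁻¹' Iic 1) / volume (Nf d ⁻¹' Iic 1))
          * ∫⁻ x, φ (Nf d x) := by
  rw [← lintegral_map hφ measurable_Nf, map_restrict_eq hd hE hhom,
    lintegral_smul_measure, lintegral_map hφ measurable_Nf, smul_eq_mul]

lemma joint (hd : 0 < d) {g : ℝ → ℝ≥0∞} (hg : Measurable g)
    {A : Set (Fin d → ℝ)} (hA : MeasurableSet A) {B : Set ℝ} (hB : MeasurableSet B) :
    volume.withDensity (fun x => g (Nf d x)) (Tf d ⁻¹' A ∩ Nf d ⁻¹' B)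
      = (volume (Tf d ⁻¹' A ∩ Nf d ⁻¹' Iic 1) / volume (Nf d ⁻¹' Iic 1))
          * volume.withDensity (fun x => g (Nf d x)) (Nf d ⁻¹' B) := by
  have hEm : MeasurableSet (Tf d ⁻¹' A) := measurable_Tf hA
  have hBm : MeasurableSet (Nf d ⁻¹' B) := measurable_Nf hB
  have hhom : ∀ c : ℝ, 0 < c → ∀ x, x ∈ Tf d ⁻¹' A ↔ c • x ∈ Tf d ⁻¹' A := by
    intro c hc x
    simp [mem_preimage, Tf_smul hc]
  have hind : ∀ x : Fin d → ℝ,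
      (Nf d ⁻¹' B).indicator (fun y => g (Nf d y)) x = B.indicator g (Nf d x) := by
    intro x
    by_cases hx : Nf d x ∈ B <;> simp [indicator, hx]
  rw [withDensity_apply _ (hEm.inter hBm), withDensity_apply _ hBm]
  have step1 : ∫⁻ x in Tf d ⁻¹' A ∩ Nf d ⁻¹' B, g (Nf d x)
      = ∫⁻ x in Tf d ⁻¹' A, B.indicator g (Nf d x) := by
    rw [inter_comm, ← Measure.restrict_restrict hBm, ← lintegral_indicator hBm]
    exact lintegral_congr hind
  rw [step1, setLintegral_eq hd hEm hhom (hg.indicator hB)]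
  congr 1
  rw [← lintegral_indicator hBm]
  exact (lintegral_congr hind).symm

lemma integrable_exp_neg_abs : Integrable (fun x : ℝ => Real.exp (-|x|)) := by
  have h1 : IntegrableOn (fun x : ℝ => Real.exp (-|x|)) (Iic 0) := by
    refine (integrableOn_exp_Iic 0).congr_fun (fun x hx => ?_) measurableSet_Iic
    rw [abs_of_nonpos hx, neg_neg]
  have h2 : IntegrableOn (fun x : ℝ => Real.exp (-|x|)) (Ioi 0) := by
    refine ((exp_neg_integrableOn_Ioi 0 one_pos).congr_fun (fun x hx => ?_)
      measurableSet_Ioi)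
    beta_reduce
    rw [neg_mul, one_mul, abs_of_pos hx]
  have := h1.union h2
  rwa [Iic_union_Ioi, integrableOn_univ] at this

lemma integral_exp_neg_abs : ∫ x : ℝ, Real.exp (-|x|) = 2 := by
  rw [integral_comp_abs (f := fun x => Real.exp (-x)), integral_exp_neg_Ioi_zero, mul_one]

instance laplace_prob : IsProbabilityMeasure laplaceMeasure := by
  constructor
  rw [laplaceMeasure, withDensity_apply _ MeasurableSet.univ, Measure.restrict_univ]
  have hi : Integrable (fun x : ℝ => (1 / 2) * Real.exp (-|x|)) :=
    integrable_exp_neg_abs.const_mul _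
  rw [← ofReal_integral_eq_lintegral_ofReal hi
    (Filter.Eventually.of_forall fun x => by positivity)]
  rw [MeasureTheory.integral_const_mul, integral_exp_neg_abs]
  norm_num

lemma lintegral_pi_prod : ∀ {n : ℕ} (f : Fin n → ℝ → ℝ≥0∞), (∀ i, Measurable (f i)) →
    ∫⁻ x : Fin n → ℝ, ∏ i, f i (x i) ∂(Measure.pi fun _ => (volume : Measure ℝ))
      = ∏ i, ∫⁻ t, f i t := by
  intro n
  induction n with
  | zero =>
    intro f hf
    simp [lintegral_const]
  | succ n ih =>
    intro f hf
    have hmp := (measurePreserving_piFinSuccAbove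
      (fun _ : Fin (n + 1) => (volume : Measure ℝ)) 0).symm
    rw [hmp.lintegral_map_equiv (fun x => ∏ i, f i (x i))
      (MeasurableEquiv.piFinSuccAbove (fun _ => ℝ) 0).symm]
    have heq : ∀ p : ℝ × (Fin n → ℝ),
        (∏ i, f i (((MeasurableEquiv.piFinSuccAbove (fun _ : Fin (n + 1) => ℝ) 0).symm p) i))
          = f 0 p.1 * ∏ j : Fin n, f j.succ (p.2 j) := by
      rintro ⟨a, y⟩
      simp only [MeasurableEquiv.piFinSuccAbove_symm_apply, Fin.insertNthEquiv,
        Equiv.coe_fn_mk, Fin.insertNth_zero, cast_eq, Fin.prod_univ_succ, Fin.cons_zero,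
        Fin.cons_succ]
    rw [lintegral_congr heq]
    have hprod : (∫⁻ z : ℝ × (Fin n → ℝ),
          f 0 z.1 * (fun y : Fin n → ℝ => ∏ j : Fin n, f j.succ (y j)) z.2
          ∂((volume : Measure ℝ).prod (Measure.pi fun _ : Fin n => (volume : Measure ℝ))))
        = (∫⁻ t, f 0 t) * ∫⁻ y : Fin n → ℝ, ∏ j : Fin n, f j.succ (y j)
            ∂(Measure.pi fun _ : Fin n => (volume : Measure ℝ)) :=
      lintegral_prod_mul (hf 0).aemeasurable
        ((Finset.measurable_prod Finset.univ fun (j : Fin n) _ =>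
          (hf j.succ).comp (measurable_pi_apply j)).aemeasurable)
    rw [hprod, ih (fun j => f j.succ) (fun j => hf j.succ), Fin.prod_univ_succ]

lemma pi_laplace_eq (d : ℕ) : Measure.pi (fun _ : Fin d => laplaceMeasure)
    = (volume : Measure (Fin d → ℝ)).withDensity
        (fun x => ENNReal.ofReal ((1 / 2) ^ d * Real.exp (-Nf d x))) := by
  refine Measure.pi_eq fun s hs => ?_
  set f : ℝ → ℝ≥0∞ := fun t => ENNReal.ofReal ((1 / 2) * Real.exp (-|t|)) with hf
  have hfm : Measurable f := by
    refine ENNReal.measurable_ofReal.comp ?_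
    exact (measurable_const.mul ((Real.continuous_exp.comp (continuous_abs.neg)).measurable))
  have key : ∀ x : Fin d → ℝ, (univ.pi s).indicator
      (fun x => ENNReal.ofReal ((1 / 2) ^ d * Real.exp (-Nf d x))) x
      = ∏ i, (s i).indicator f (x i) := by
    intro x
    by_cases hx : x ∈ univ.pi s
    · rw [indicator_of_mem hx]
      rw [Finset.prod_congr rfl
        (fun i _ => indicator_of_mem (hx i (mem_univ i)) f)]
      rw [hf, ← ENNReal.ofReal_prod_of_nonneg (fun i _ => by positivity)]
      congr 1
      rw [Finset.prod_mul_distrib, Finset.prod_const, ← Real.exp_sum,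
        Finset.card_univ, Fintype.card_fin]
      congr 2
      rw [Nf, ← Finset.sum_neg_distrib]
    · rw [indicator_of_notMem hx]
      rw [mem_pi] at hx
      push_neg at hx
      obtain ⟨i, _, hi⟩ := hx
      symm
      exact Finset.prod_eq_zero (Finset.mem_univ i) (indicator_of_notMem hi f)
  rw [withDensity_apply _ (MeasurableSet.univ_pi fun i => hs i),
    ← lintegral_indicator (MeasurableSet.univ_pi fun i => hs i), lintegral_congr key,
    volume_pi, lintegral_pi_prod _ (fun i => hfm.indicator (hs i))]
  refine Finset.prod_congr rfl fun i _ => ?_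
  rw [lintegral_indicator (hs i), laplaceMeasure, withDensity_apply _ (hs i)]

lemma cond_eq (d : ℕ) : (volume[|{x : Fin d → ℝ | ∑ i, |x i| ≤ 1}])
    = volume.withDensity
        (fun x => (volume (Nf d ⁻¹' Iic 1))⁻¹ * (Iic (1 : ℝ)).indicator 1 (Nf d x)) := by
  have hSm : MeasurableSet (Nf d ⁻¹' Iic 1) := measurable_Nf measurableSet_Iic
  have hset : {x : Fin d → ℝ | ∑ i, |x i| ≤ 1} = Nf d ⁻¹' Iic 1 := rfl
  rw [hset, ProbabilityTheory.cond, ← withDensity_indicator_one hSm,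
    ← withDensity_smul' _ _ (ENNReal.inv_ne_top.2 vol_ball_pos.ne')]
  refine congrArg _ (funext fun x => ?_)
  simp only [Pi.smul_apply, smul_eq_mul]
  congr 1

end SchechtmanZinnAux

open SchechtmanZinnAux Set
open scoped ENNReal

/-- (Schechtman–Zinn) If `W = (W_1, …, W_d)` is a vector of i.i.d. mean-0 scale-1 Laplace
random variables, then `W/‖W‖₁` is uniformly distributed on the ℓ¹-sphere (w.r.t. the
normalized cone measure), and `W/‖W‖₁` is independent of `‖W‖₁`. -/
theorem schechtman_zinn (d : ℕ) (hd : 0 < d) :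
    Measure.map (fun w : Fin d → ℝ => (∑ i, |w i|)⁻¹ • w)
        (Measure.pi fun _ : Fin d => laplaceMeasure) = sphereConeMeasure d ∧
      IndepFun (fun w : Fin d → ℝ => (∑ i, |w i|)⁻¹ • w) (fun w : Fin d → ℝ => ∑ i, |w i|)
        (Measure.pi fun _ : Fin d => laplaceMeasure) := by
  have hTf_eq : (fun w : Fin d → ℝ => (∑ i, |w i|)⁻¹ • w) = Tf d := rfl
  have hNf_eq : (fun w : Fin d → ℝ => ∑ i, |w i|) = Nf d := rfl
  set κ : Set (Fin d → ℝ) → ℝ≥0∞ :=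
    fun A => volume (Tf d ⁻¹' A ∩ Nf d ⁻¹' Iic 1) / volume (Nf d ⁻¹' Iic 1) with hκ
  -- the Laplace side
  have hgL : Measurable (fun r : ℝ => ENNReal.ofReal ((1 / 2) ^ d * Real.exp (-r))) :=
    ENNReal.measurable_ofReal.comp
      (measurable_const.mul (Real.continuous_exp.measurable.comp measurable_neg))
  set μL : Measure (Fin d → ℝ) := Measure.pi fun _ : Fin d => laplaceMeasure with hμL
  have hL : μL = volume.withDensity
      (fun x => (fun r : ℝ => ENNReal.ofReal ((1 / 2) ^ d * Real.exp (-r))) (Nf d x)) :=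
    pi_laplace_eq d
  haveI : IsProbabilityMeasure μL := by
    rw [hμL]; infer_instance
  have hjointL : ∀ A B, MeasurableSet A → MeasurableSet B →
      μL (Tf d ⁻¹' A ∩ Nf d ⁻¹' B) = κ A * μL (Nf d ⁻¹' B) := by
    intro A B hA hB
    rw [hL]
    exact joint hd hgL hA hB
  have hmapL : ∀ A, MeasurableSet A → μL (Tf d ⁻¹' A) = κ A := by
    intro A hA
    have h := hjointL A univ hA MeasurableSet.univ
    simpa [preimage_univ, inter_univ, measure_univ] using h
  -- the uniform (cone) side
  set μU : Measure (Fin d → ℝ) :=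
    ProbabilityTheory.cond volume {x : Fin d → ℝ | ∑ i, |x i| ≤ 1} with hμU
  have hgU : Measurable
      (fun r : ℝ => (volume (Nf d ⁻¹' Iic 1))⁻¹ * (Iic (1 : ℝ)).indicator 1 r) :=
    measurable_const.mul (measurable_one.indicator measurableSet_Iic)
  have hU : μU = volume.withDensity
      (fun x => (fun r : ℝ => (volume (Nf d ⁻¹' Iic 1))⁻¹ * (Iic (1 : ℝ)).indicator 1 r)
        (Nf d x)) := cond_eq d
  haveI : IsProbabilityMeasure μU := by
    rw [hμU]
    exact cond_isProbabilityMeasure_of_finite vol_ball_pos.ne' (vol_Iic_lt_top 1).ne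
  have hjointU : ∀ A B, MeasurableSet A → MeasurableSet B →
      μU (Tf d ⁻¹' A ∩ Nf d ⁻¹' B) = κ A * μU (Nf d ⁻¹' B) := by
    intro A B hA hB
    rw [hU]
    exact joint hd hgU hA hB
  have hmapU : ∀ A, MeasurableSet A → μU (Tf d ⁻¹' A) = κ A := by
    intro A hA
    have h := hjointU A univ hA MeasurableSet.univ
    simpa [preimage_univ, inter_univ, measure_univ] using h
  constructor
  · rw [sphereConeMeasure, hTf_eq]
    refine Measure.ext fun A hA => ?_
    rw [Measure.map_apply measurable_Tf hA, Measure.map_apply measurable_Tf hA,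
      hmapL A hA, hmapU A hA]
  · rw [hTf_eq, hNf_eq, indepFun_iff_measure_inter_preimage_eq_mul]
    intro A B hA hB
    rw [hjointL A B hA hB, hmapL A hA]
end
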